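/- arXiv:2006.16544 — 3 statements merged into one kernel-verified Lean document; each statement's English description precedes it below -/
import Mathlib

section
/- For every 0 < p < 1 and every constant C > 0 there is n₀ such that the following holds for all n ≥ n₀. Let V be an n-element set, let U₁,…,U_s ⊂ V with s ≤ n^C, and let G₁,…,G_t be graphs on vertex set V with t ≤ n^C. Suppose |U_i| ≥ α_i·n for constants 0 < α_i < 1 (i = 1,…,s) and that G_j has at least β_j·C(n,2) edges for constants 0 < β_j < 1 (j = 1,…,t). Then there exists a subset R ⊂ V such that (a) | |R| − pn | ≤ p·n^{2/3}; (b) for all i, |U_i ∩ R| ≥ (α_i − 2n^{−1/3})·|R|; and (c) for all j, the number of edges of G_j with both endpoints in R is at least (β_j − 3n^{−1/3})·C(|R|,2). -/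
open Finset

namespace Stmt3

variable {n : ℕ}

noncomputable def w (p : ℝ) (n : ℕ) (R : Finset (Fin n)) : ℝ :=
  p ^ R.card * (1 - p) ^ (n - R.card)

noncomputable def E (p : ℝ) (n : ℕ) (f : Finset (Fin n) → ℝ) : ℝ :=
  ∑ R ∈ (univ : Finset (Fin n)).powerset, w p n R * f R

lemma w_nonneg {p : ℝ} (hp0 : 0 ≤ p) (hp1 : p ≤ 1) (R : Finset (Fin n)) : 0 ≤ w p n R := by
  have : (0:ℝ) ≤ 1 - p := by linarith
  exact mul_nonneg (pow_nonneg hp0 _) (pow_nonneg this _)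

lemma sum_w (p : ℝ) : ∑ R ∈ (univ : Finset (Fin n)).powerset, w p n R = 1 := by
  have h := Finset.prod_add (fun _ : Fin n => p) (fun _ : Fin n => 1 - p) univ
  simp only [prod_const, add_sub_cancel, one_pow] at h
  rw [eq_comm]
  rw [show (1:ℝ) = ∑ x ∈ (univ : Finset (Fin n)).powerset, p ^ x.card * (1 - p) ^ (univ \ x).card from h]
  apply Finset.sum_congr rfl
  intro R hR
  rw [mem_powerset] at hR
  rw [w, card_sdiff_of_subset hR, card_univ, Fintype.card_fin]

lemma E_const (p : ℝ) (c : ℝ) : E p n (fun _ => c) = c := by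
  rw [E, ← Finset.sum_mul, sum_w, one_mul]

lemma E_sum (p : ℝ) {κ : Type*} (K : Finset κ) (g : κ → Finset (Fin n) → ℝ) :
    E p n (fun R => ∑ k ∈ K, g k R) = ∑ k ∈ K, E p n (g k) := by
  simp only [E, Finset.mul_sum]
  exact Finset.sum_comm

lemma E_smul (p : ℝ) (c : ℝ) (f : Finset (Fin n) → ℝ) :
    E p n (fun R => c * f R) = c * E p n f := by
  rw [E, E, Finset.mul_sum]
  exact Finset.sum_congr rfl fun R _ => by ring

lemma w_insert {p : ℝ} {v : Fin n} {R : Finset (Fin n)} (hv : v ∉ R) (hR : R.card < n) :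
    (1 - p) * w p n (insert v R) = p * w p n R := by
  rw [w, w, card_insert_of_notMem hv]
  have h1 : n - R.card = (n - (R.card + 1)) + 1 := by omega
  rw [h1, pow_succ, pow_succ]
  ring

lemma indep (p : ℝ) (F : Finset (Fin n)) (φ : Finset (Fin n) → ℝ)
    (hφ : ∀ R, φ (R ∩ F) = φ R) (v : Fin n) (hv : v ∉ F) (c₀ c₁ : ℝ) :
    E p n (fun R => φ R * (if v ∈ R then c₁ else c₀)) =
      E p n φ * (p * c₁ + (1 - p) * c₀) := by
  classical
  have huniv : (univ : Finset (Fin n)) = insert v (univ.erase v) :=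
    (Finset.insert_erase (mem_univ v)).symm
  have hve : v ∉ (univ : Finset (Fin n)).erase v := Finset.notMem_erase _ _
  have hsplit : ∀ f : Finset (Fin n) → ℝ,
      ∑ R ∈ (univ : Finset (Fin n)).powerset, f R =
        ∑ R ∈ ((univ : Finset (Fin n)).erase v).powerset, f R +
        ∑ R ∈ ((univ : Finset (Fin n)).erase v).powerset, f (insert v R) := by
    intro f
    conv_lhs => rw [huniv]
    exact Finset.sum_powerset_insert hve f
  have hkey : ∀ R ∈ ((univ : Finset (Fin n)).erase v).powerset,
      (1 - p) * w p n (insert v R) = p * w p n R := by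
    intro R hR
    rw [mem_powerset] at hR
    have hvR : v ∉ R := fun h => hve (hR h)
    have hcard : R.card < n := by
      have h2 := Finset.card_le_card hR
      rw [Finset.card_erase_of_mem (mem_univ v), card_univ, Fintype.card_fin] at h2
      have hn : 0 < n := v.pos
      omega
    exact w_insert hvR hcard
  have hφins : ∀ R ∈ ((univ : Finset (Fin n)).erase v).powerset, φ (insert v R) = φ R := by
    intro R hR
    rw [mem_powerset] at hR
    have hvR : v ∉ R := fun h => hve (hR h)
    have h1 : (insert v R) ∩ F = R ∩ F := by
      ext u; simp only [mem_inter, mem_insert]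
      constructor
      · rintro ⟨h | h, hF⟩
        · exact absurd (h ▸ hF) hv
        · exact ⟨h, hF⟩
      · rintro ⟨h, hF⟩; exact ⟨Or.inr h, hF⟩
    rw [← hφ (insert v R), h1, hφ R]
  rw [E, E, hsplit, hsplit]
  rw [add_mul, Finset.sum_mul, Finset.sum_mul, ← Finset.sum_add_distrib, ← Finset.sum_add_distrib]
  apply Finset.sum_congr rfl
  intro R hR
  rw [mem_powerset] at hR
  have hvR : v ∉ R := fun h => hve (hR h)
  have hvI : v ∈ insert v R := mem_insert_self v R
  rw [if_neg hvR, if_pos hvI, hφins R (mem_powerset.mpr hR)]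
  have hw := hkey R (mem_powerset.mpr hR)
  linear_combination (φ R * (c₁ - c₀)) * hw


noncomputable def Y (p : ℝ) (v : Fin n) (R : Finset (Fin n)) : ℝ :=
  (if v ∈ R then 1 else 0) - p

noncomputable def S (p : ℝ) (a : Fin n → ℝ) (F : Finset (Fin n)) (R : Finset (Fin n)) : ℝ :=
  ∑ v ∈ F, a v * Y p v R

noncomputable def mu (p : ℝ) (j : ℕ) : ℝ := p * (1 - p) ^ j + (1 - p) * (-p) ^ j

lemma mu_zero (p : ℝ) : mu p 0 = 1 := by simp [mu]

lemma mu_one (p : ℝ) : mu p 1 = 0 := by simp [mu]; ring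

lemma abs_mu_le {p : ℝ} (hp0 : 0 ≤ p) (hp1 : p ≤ 1) (j : ℕ) : |mu p j| ≤ 1 := by
  have h1 : (0:ℝ) ≤ 1 - p := by linarith
  have h2 : |(1 - p) ^ j| ≤ 1 := by
    rw [abs_pow]; apply pow_le_one₀ (abs_nonneg _); rw [abs_of_nonneg h1]; linarith
  have h3 : |(-p) ^ j| ≤ 1 := by
    rw [abs_pow]; apply pow_le_one₀ (abs_nonneg _); rw [abs_neg, abs_of_nonneg hp0]; linarith
  calc |mu p j| ≤ |p * (1 - p) ^ j| + |(1 - p) * (-p) ^ j| := abs_add_le _ _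
    _ = p * |(1 - p) ^ j| + (1 - p) * |(-p) ^ j| := by
        rw [abs_mul, abs_mul, abs_of_nonneg hp0, abs_of_nonneg h1]
    _ ≤ p * 1 + (1 - p) * 1 :=
        add_le_add (mul_le_mul_of_nonneg_left h2 hp0) (mul_le_mul_of_nonneg_left h3 h1)
    _ = 1 := by ring

lemma S_inter (p : ℝ) (a : Fin n → ℝ) (F : Finset (Fin n)) (R : Finset (Fin n)) :
    S p a F (R ∩ F) = S p a F R := by
  apply Finset.sum_congr rfl
  intro v hv
  have : v ∈ R ∩ F ↔ v ∈ R := by simp [mem_inter, hv]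
  rw [Y, Y, if_congr this rfl rfl]

lemma E_S_pow_mul_Y (p : ℝ) (a : Fin n → ℝ) (F : Finset (Fin n)) (v : Fin n) (hv : v ∉ F)
    (q j : ℕ) :
    E p n (fun R => (S p a F R) ^ q * (Y p v R) ^ j) = E p n (fun R => (S p a F R) ^ q) * mu p j := by
  have h1 : ∀ R : Finset (Fin n), (Y p v R) ^ j = (if v ∈ R then ((1:ℝ) - p) ^ j else (-p) ^ j) := by
    intro R
    rw [Y]
    by_cases h : v ∈ R <;> simp [h]
  have h2 : E p n (fun R => (S p a F R) ^ q * (Y p v R) ^ j) =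
      E p n (fun R => (S p a F R) ^ q * (if v ∈ R then ((1:ℝ) - p) ^ j else (-p) ^ j)) := by
    unfold E; exact Finset.sum_congr rfl fun R _ => by dsimp only; rw [h1]
  rw [h2, indep p F (fun R => (S p a F R) ^ q) (fun R => by rw [S_inter]) v hv, mu]

lemma B_rec {m : ℕ} (hm : 1 ≤ m) :
    (2:ℝ) ^ m * 4 ^ ((m - 2) ^ 2) ≤ 4 ^ (m ^ 2) := by
  have h1 : (4:ℝ) ^ ((m-2)^2) = 2 ^ (2 * ((m-2)^2)) := by
    rw [show (4:ℝ) = 2 ^ 2 from by norm_num, ← pow_mul]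
  have h2 : (4:ℝ) ^ (m^2) = 2 ^ (2 * m^2) := by
    rw [show (4:ℝ) = 2 ^ 2 from by norm_num, ← pow_mul]
  rw [h1, h2, ← pow_add]
  apply pow_le_pow_right₀ (by norm_num)
  have : 2*((m-2)^2) + m ≤ 2*(m^2) := by
    rcases m with _ | _ | q
    · omega
    · norm_num
    · have h3 : q + 2 - 2 = q := by omega
      rw [h3]
      nlinarith [sq_nonneg q]
  omega

lemma moment_bound {p : ℝ} (hp0 : 0 ≤ p) (hp1 : p ≤ 1) (a : Fin n → ℝ)
    (ha : ∀ v, 0 ≤ a v ∧ a v ≤ 1) (F : Finset (Fin n)) :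
    ∀ m : ℕ, |E p n (fun R => (S p a F R) ^ m)| ≤
      4 ^ (m ^ 2) * (F.card : ℝ) ^ ((m + 1) / 2) := by
  induction F using Finset.induction_on with
  | empty =>
    intro m
    have hS : ∀ R : Finset (Fin n), S p a ∅ R = 0 := fun R => Finset.sum_empty
    have : E p n (fun R => (S p a ∅ R) ^ m) = (0:ℝ) ^ m := by
      have := E_const (n := n) p ((0:ℝ) ^ m)
      rw [← this]
      unfold E; exact Finset.sum_congr rfl fun R _ => by dsimp only; rw [hS]
    rw [this]
    match m with
    | 0 => simp
    | (q+1) => simp [Nat.succ_div, pow_succ]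
  | @insert v F hv ih =>
    intro m
    rcases Nat.eq_zero_or_pos m with hm0 | hm1
    · subst hm0
      simp only [pow_zero]
      rw [E_const]
      norm_num
    · have hSins : ∀ R : Finset (Fin n), S p a (insert v F) R = S p a F R + a v * Y p v R := by
        intro R; unfold S; rw [Finset.sum_insert hv]; ring
      have hexp : E p n (fun R => S p a (insert v F) R ^ m) =
          ∑ k ∈ Finset.range (m+1),
            ((m.choose k : ℝ) * a v ^ (m-k) * mu p (m-k)) * E p n (fun R => S p a F R ^ k) := by
        have h1 : E p n (fun R => S p a (insert v F) R ^ m) =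
            E p n (fun R => ∑ k ∈ Finset.range (m+1),
              ((m.choose k : ℝ) * a v ^ (m-k)) * (S p a F R ^ k * Y p v R ^ (m-k))) := by
          unfold E
          apply Finset.sum_congr rfl
          intro R _
          dsimp only
          rw [hSins R, add_pow]
          congr 1
          apply Finset.sum_congr rfl
          intro k _
          rw [mul_pow]
          ring
        rw [h1, E_sum]
        apply Finset.sum_congr rfl
        intro k _
        rw [E_smul, E_S_pow_mul_Y p a F v hv k (m-k)]
        ring
      rw [hexp]
      set c : ℝ := (F.card : ℝ) with hc
      have hc0 : 0 ≤ c := Nat.cast_nonneg _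
      have hcard : (((insert v F).card : ℕ) : ℝ) = c + 1 := by
        rw [card_insert_of_notMem hv]; push_cast; rfl
      rw [hcard]
      have hcp : (0:ℝ) ≤ c + 1 := by linarith
      have hcp1 : (1:ℝ) ≤ c + 1 := by linarith
      have habs : ∀ k ∈ Finset.range (m+1),
          |((m.choose k : ℝ) * a v ^ (m-k) * mu p (m-k)) * E p n (fun R => S p a F R ^ k)| ≤
            (if k = m then (4:ℝ)^(m^2) * c ^ ((m+1)/2)
             else (m.choose k : ℝ) * 4^((m-2)^2) * (c+1) ^ ((m-1)/2)) := by
        intro k hk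
        rw [Finset.mem_range] at hk
        by_cases hkm : k = m
        · subst hkm
          rw [if_pos rfl, Nat.sub_self, Nat.choose_self, mu_zero, pow_zero]
          simpa using ih k
        · rw [if_neg hkm]
          by_cases hk1 : k = m - 1
          · have hmk : m - k = 1 := by omega
            rw [hmk, mu_one, mul_zero, zero_mul, abs_zero]
            have : (0:ℝ) ≤ (c+1) ^ ((m-1)/2) := pow_nonneg hcp _
            have hch : (0:ℝ) ≤ (m.choose k : ℝ) := Nat.cast_nonneg _
            positivity
          · have hk2 : k + 2 ≤ m := by omega
            have h4 : (4:ℝ)^(k^2) ≤ 4^((m-2)^2) :=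
              pow_le_pow_right₀ (by norm_num) (Nat.pow_le_pow_left (by omega) 2)
            have h5 : c ^ ((k+1)/2) ≤ (c+1) ^ ((m-1)/2) :=
              calc c ^ ((k+1)/2) ≤ (c+1)^((k+1)/2) :=
                    pow_le_pow_left₀ hc0 (by linarith) _
                _ ≤ (c+1)^((m-1)/2) := pow_le_pow_right₀ hcp1 (by omega)
            have hE : |E p n (fun R => S p a F R ^ k)| ≤ 4^((m-2)^2) * (c+1) ^ ((m-1)/2) :=
              (ih k).trans (mul_le_mul h4 h5 (pow_nonneg hc0 _) (by positivity))
            have ha1 : |a v ^ (m-k)| ≤ 1 := by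
              rw [abs_pow]
              apply pow_le_one₀ (abs_nonneg _)
              rw [abs_of_nonneg (ha v).1]; exact (ha v).2
            have hmu : |mu p (m-k)| ≤ 1 := abs_mu_le hp0 hp1 _
            calc |((m.choose k : ℝ) * a v ^ (m-k) * mu p (m-k)) * E p n (fun R => S p a F R ^ k)|
                = |(m.choose k : ℝ)| * |a v ^ (m-k)| * |mu p (m-k)| *
                    |E p n (fun R => S p a F R ^ k)| := by
                  rw [abs_mul, abs_mul, abs_mul]
              _ ≤ (m.choose k : ℝ) * 1 * 1 * (4^((m-2)^2) * (c+1) ^ ((m-1)/2)) := by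
                  rw [Nat.abs_cast]
                  have h0 : (0:ℝ) ≤ (m.choose k : ℝ) := Nat.cast_nonneg _
                  apply mul_le_mul _ hE (abs_nonneg _) (by positivity)
                  apply mul_le_mul _ hmu (abs_nonneg _) (by positivity)
                  exact mul_le_mul_of_nonneg_left ha1 h0
              _ = (m.choose k : ℝ) * 4^((m-2)^2) * (c+1) ^ ((m-1)/2) := by ring
      calc |∑ k ∈ Finset.range (m+1),
              ((m.choose k : ℝ) * a v ^ (m-k) * mu p (m-k)) * E p n (fun R => S p a F R ^ k)|
          ≤ ∑ k ∈ Finset.range (m+1),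
              |((m.choose k : ℝ) * a v ^ (m-k) * mu p (m-k)) * E p n (fun R => S p a F R ^ k)| :=
            Finset.abs_sum_le_sum_abs _ _
        _ ≤ ∑ k ∈ Finset.range (m+1),
              (if k = m then (4:ℝ)^(m^2) * c ^ ((m+1)/2)
               else (m.choose k : ℝ) * 4^((m-2)^2) * (c+1) ^ ((m-1)/2)) :=
            Finset.sum_le_sum habs
        _ ≤ (4:ℝ)^(m^2) * c ^ ((m+1)/2) + 2^m * 4^((m-2)^2) * (c+1) ^ ((m-1)/2) := by
            rw [Finset.sum_range_succ, if_pos rfl]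
            rw [add_comm]
            apply add_le_add le_rfl
            have hstep : ∀ k ∈ Finset.range m,
                (if k = m then (4:ℝ)^(m^2) * c ^ ((m+1)/2)
                 else (m.choose k : ℝ) * 4^((m-2)^2) * (c+1) ^ ((m-1)/2)) ≤
                (m.choose k : ℝ) * (4^((m-2)^2) * (c+1) ^ ((m-1)/2)) := by
              intro k hk
              rw [Finset.mem_range] at hk
              rw [if_neg (by omega), mul_assoc]
            calc ∑ k ∈ Finset.range m, _ ≤ ∑ k ∈ Finset.range m,
                  (m.choose k : ℝ) * (4^((m-2)^2) * (c+1) ^ ((m-1)/2)) :=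
                Finset.sum_le_sum hstep
              _ = (∑ k ∈ Finset.range m, (m.choose k : ℝ)) * (4^((m-2)^2) * (c+1) ^ ((m-1)/2)) :=
                (Finset.sum_mul _ _ _).symm
              _ ≤ 2^m * (4^((m-2)^2) * (c+1) ^ ((m-1)/2)) := by
                apply mul_le_mul_of_nonneg_right _ (by positivity)
                have h6 : (∑ k ∈ Finset.range (m+1), (m.choose k : ℝ)) = 2^m := by
                  rw [← Nat.cast_sum]
                  rw [Nat.sum_range_choose]
                  push_cast; ring
                have h7 : (∑ k ∈ Finset.range m, (m.choose k : ℝ)) ≤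
                    ∑ k ∈ Finset.range (m+1), (m.choose k : ℝ) := by
                  apply Finset.sum_le_sum_of_subset_of_nonneg
                  · exact Finset.range_subset_range.mpr (by omega)
                  · intro i _ _; exact Nat.cast_nonneg _
                rw [h6] at h7; exact h7
              _ = 2^m * 4^((m-2)^2) * (c+1) ^ ((m-1)/2) := by ring
        _ ≤ (4:ℝ)^(m^2) * c ^ ((m+1)/2) + 4^(m^2) * (c+1) ^ ((m-1)/2) := by
            apply add_le_add le_rfl
            exact mul_le_mul_of_nonneg_right (B_rec hm1) (pow_nonneg hcp _)
        _ ≤ (4:ℝ)^(m^2) * (c+1) ^ ((m+1)/2) := by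
            have he : (m+1)/2 = (m-1)/2 + 1 := by omega
            rw [he]
            have h8 : c ^ ((m-1)/2) ≤ (c+1) ^ ((m-1)/2) := pow_le_pow_left₀ hc0 (by linarith) _
            have key : c^((m-1)/2+1) + (c+1)^((m-1)/2) ≤ (c+1)^((m-1)/2+1) := by
              rw [pow_succ, pow_succ]
              nlinarith [h8, pow_nonneg hc0 ((m-1)/2)]
            nlinarith [key, pow_nonneg (show (0:ℝ) ≤ 4 by norm_num) (m^2)]

lemma S_univ_form (p : ℝ) (a : Fin n → ℝ) (R : Finset (Fin n)) :
    S p a univ R = ∑ v ∈ R, a v - p * ∑ v, a v := by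
  unfold S Y
  calc ∑ v ∈ univ, a v * ((if v ∈ R then (1:ℝ) else 0) - p)
      = ∑ v ∈ univ, ((if v ∈ R then a v else 0) - p * a v) := by
        apply Finset.sum_congr rfl
        intro v _
        by_cases h : v ∈ R <;> simp [h] <;> ring
    _ = ∑ v ∈ univ, (if v ∈ R then a v else 0) - p * ∑ v, a v := by
        rw [Finset.sum_sub_distrib, Finset.mul_sum]
    _ = ∑ v ∈ R, a v - p * ∑ v, a v := by
        rw [Finset.sum_ite_mem, univ_inter]

lemma core (p C' : ℝ) (hp0 : 0 < p) (hp1 : p < 1) :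
    ∃ n₀ : ℕ, ∀ n : ℕ, n₀ ≤ n → ∀ (ι : Type) (_ : Fintype ι) (a : ι → Fin n → ℝ),
      (Fintype.card ι : ℝ) ≤ (n:ℝ) ^ C' → (∀ l v, 0 ≤ a l v ∧ a l v ≤ 1) →
      ∃ R : Finset (Fin n), ∀ l,
        |∑ v ∈ R, a l v - p * ∑ v, a l v| ≤ p^2/8 * (n:ℝ)^((2:ℝ)/3) := by
  classical
  set k : ℕ := 3 * (⌈C'⌉₊ + 1) with hk
  set K : ℝ := 4^((2*k)^2) * (8/p^2)^(2*k) with hK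
  refine ⟨⌈K⌉₊ + 1, ?_⟩
  intro n hn ι inst a hcard ha
  have hp0' : (0:ℝ) < p^2/8 := by positivity
  have hKn : K < (n:ℝ) := by
    have h1 : K ≤ (⌈K⌉₊ : ℝ) := Nat.le_ceil K
    have h2 : (⌈K⌉₊ : ℝ) < (n:ℝ) := by exact_mod_cast Nat.lt_of_succ_le hn
    linarith
  have hK1 : (1:ℝ) ≤ K := by
    rw [hK]
    have e1 : (1:ℝ) ≤ 4^((2*k)^2) := one_le_pow₀ (by norm_num)
    have e2 : (1:ℝ) ≤ (8/p^2)^(2*k) := by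
      apply one_le_pow₀
      rw [le_div_iff₀ (by positivity)]
      nlinarith
    nlinarith
  have hK0 : (0:ℝ) < K := by linarith
  have hn0 : (0:ℝ) < (n:ℝ) := lt_trans hK0 hKn
  have hn1 : (1:ℝ) ≤ (n:ℝ) := by linarith
  set lam : ℝ := p^2/8 * (n:ℝ)^((2:ℝ)/3) with hlam
  have hlam0 : 0 < lam := mul_pos hp0' (Real.rpow_pos_of_pos hn0 _)
  by_contra hcon
  push_neg at hcon
  set f : ι → Finset (Fin n) → ℝ :=
    fun l R => if lam < |S p (a l) univ R| then w p n R else 0 with hf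
  have hf0 : ∀ l R, 0 ≤ f l R := by
    intro l R
    rw [hf]
    dsimp only
    split
    · exact w_nonneg hp0.le hp1.le R
    · exact le_refl 0
  -- 1 ≤ total bad mass
  have hwle : ∀ R ∈ (univ : Finset (Fin n)).powerset, w p n R ≤ ∑ l, f l R := by
    intro R _
    obtain ⟨l, hl⟩ := hcon R
    have : f l R = w p n R := by
      rw [hf]
      dsimp only
      rw [if_pos]
      rw [S_univ_form]
      exact hl
    calc w p n R = f l R := this.symm
      _ ≤ ∑ l, f l R := Finset.single_le_sum (fun l _ => hf0 l R) (mem_univ l)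
  have htot : (1:ℝ) ≤ ∑ l, ∑ R ∈ (univ : Finset (Fin n)).powerset, f l R := by
    calc (1:ℝ) = ∑ R ∈ (univ : Finset (Fin n)).powerset, w p n R := (sum_w p).symm
      _ ≤ ∑ R ∈ (univ : Finset (Fin n)).powerset, ∑ l, f l R := Finset.sum_le_sum hwle
      _ = ∑ l, ∑ R ∈ (univ : Finset (Fin n)).powerset, f l R := Finset.sum_comm
  -- Markov bound per l
  have hmark : ∀ l : ι, lam^(2*k) * ∑ R ∈ (univ : Finset (Fin n)).powerset, f l R ≤
      4 ^ ((2*k) ^ 2) * (n : ℝ) ^ k := by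
    intro l
    have hpt : ∀ R ∈ (univ : Finset (Fin n)).powerset,
        lam^(2*k) * f l R ≤ w p n R * (S p (a l) univ R)^(2*k) := by
      intro R _
      rw [hf]
      dsimp only
      split
      · rename_i hbad
        have h1 : lam^(2*k) ≤ |S p (a l) univ R|^(2*k) :=
          pow_le_pow_left₀ hlam0.le hbad.le _
        have h2 : |S p (a l) univ R|^(2*k) = (S p (a l) univ R)^(2*k) := by
          rw [pow_abs, abs_of_nonneg]
          rw [pow_mul]
          positivity
        rw [mul_comm]
        apply mul_le_mul_of_nonneg_left _ (w_nonneg hp0.le hp1.le R)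
        rw [← h2]
        exact h1
      · rw [mul_zero]
        apply mul_nonneg (w_nonneg hp0.le hp1.le R)
        rw [pow_mul]
        positivity
    calc lam^(2*k) * ∑ R ∈ (univ : Finset (Fin n)).powerset, f l R
        = ∑ R ∈ (univ : Finset (Fin n)).powerset, lam^(2*k) * f l R := Finset.mul_sum _ _ _
      _ ≤ ∑ R ∈ (univ : Finset (Fin n)).powerset, w p n R * (S p (a l) univ R)^(2*k) :=
          Finset.sum_le_sum hpt
      _ = E p n (fun R => (S p (a l) univ R)^(2*k)) := rfl
      _ ≤ |E p n (fun R => (S p (a l) univ R)^(2*k))| := le_abs_self _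
      _ ≤ 4 ^ ((2*k) ^ 2) * ((univ : Finset (Fin n)).card : ℝ) ^ ((2*k + 1) / 2) :=
          moment_bound hp0.le hp1.le (a l) (ha l) univ (2*k)
      _ = 4 ^ ((2*k) ^ 2) * (n : ℝ) ^ k := by
          rw [card_univ, Fintype.card_fin]
          congr 1
          congr 1
          omega
  -- combine
  have hcomb : lam^(2*k) * ∑ l, ∑ R ∈ (univ : Finset (Fin n)).powerset, f l R ≤
      (Fintype.card ι : ℝ) * (4 ^ ((2*k) ^ 2) * (n : ℝ) ^ k) := by
    rw [Finset.mul_sum]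
    calc ∑ l, lam^(2*k) * ∑ R ∈ (univ : Finset (Fin n)).powerset, f l R
        ≤ ∑ l : ι, 4 ^ ((2*k) ^ 2) * (n : ℝ) ^ k := Finset.sum_le_sum (fun l _ => by
          have := hmark l
          calc lam^(2*k) * ∑ R ∈ (univ : Finset (Fin n)).powerset, f l R
              ≤ 4 ^ ((2*k) ^ 2) * (n : ℝ) ^ k := this
            _ = 4 ^ ((2*k) ^ 2) * (n : ℝ) ^ k := rfl)
      _ = (Fintype.card ι : ℝ) * (4 ^ ((2*k) ^ 2) * (n : ℝ) ^ k) := by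
          rw [Finset.sum_const, card_univ, nsmul_eq_mul]
  -- the key numeric inequality
  have hkey : (Fintype.card ι : ℝ) * (4 ^ ((2*k) ^ 2) * (n : ℝ) ^ k) < lam^(2*k) := by
    have e1 : lam^(2*k) = (p^2/8)^(2*k) * (n:ℝ) ^ (((2:ℝ)/3) * (2*k : ℕ)) := by
      rw [hlam, mul_pow]
      congr 1
      rw [← Real.rpow_natCast ((n:ℝ)^((2:ℝ)/3)) (2*k), ← Real.rpow_mul hn0.le]
    have e2 : (Fintype.card ι : ℝ) * (4 ^ ((2*k) ^ 2) * (n : ℝ) ^ k) ≤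
        4 ^ ((2*k) ^ 2) * ((n:ℝ) ^ C' * (n:ℝ) ^ (k:ℝ)) := by
      rw [← Real.rpow_natCast (n:ℝ) k]
      have h4 : (0:ℝ) ≤ 4 ^ ((2*k)^2) := by positivity
      have hnk : (0:ℝ) ≤ (n:ℝ) ^ ((k:ℕ):ℝ) := Real.rpow_nonneg hn0.le _
      calc (Fintype.card ι : ℝ) * (4 ^ ((2*k) ^ 2) * (n:ℝ) ^ ((k:ℕ):ℝ))
          = 4 ^ ((2*k) ^ 2) * ((Fintype.card ι : ℝ) * (n:ℝ) ^ ((k:ℕ):ℝ)) := by ring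
        _ ≤ 4 ^ ((2*k) ^ 2) * ((n:ℝ) ^ C' * (n:ℝ) ^ ((k:ℕ):ℝ)) :=
            mul_le_mul_of_nonneg_left (mul_le_mul_of_nonneg_right hcard hnk) h4
    have e3 : (n:ℝ) ^ C' * (n:ℝ) ^ (k:ℝ) = (n:ℝ) ^ (C' + k) := (Real.rpow_add hn0 _ _).symm
    have e4 : C' + (k:ℝ) ≤ ((2:ℝ)/3) * (2*k : ℕ) - 1 := by
      have h5 : C' ≤ (⌈C'⌉₊ : ℝ) := Nat.le_ceil C'
      have h6 : (k : ℝ) = 3 * ((⌈C'⌉₊ : ℝ) + 1) := by rw [hk]; push_cast; ring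
      push_cast
      rw [h6]
      linarith
    have e5 : (n:ℝ) ^ (C' + (k:ℝ)) ≤ (n:ℝ) ^ (((2:ℝ)/3) * (2*k : ℕ) - 1) :=
      Real.rpow_le_rpow_of_exponent_le hn1 e4
    have e6 : (n:ℝ) ^ (((2:ℝ)/3) * (2*k : ℕ) - 1) =
        (n:ℝ) ^ (((2:ℝ)/3) * (2*k : ℕ)) / n := by
      rw [Real.rpow_sub hn0, Real.rpow_one]
    have e7 : 4 ^ ((2*k) ^ 2) * ((n:ℝ) ^ (((2:ℝ)/3) * (2*k : ℕ)) / n) <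
        (p^2/8)^(2*k) * (n:ℝ) ^ (((2:ℝ)/3) * (2*k : ℕ)) := by
      have hX : (0:ℝ) < (n:ℝ) ^ (((2:ℝ)/3) * (2*k : ℕ)) := Real.rpow_pos_of_pos hn0 _
      rw [div_eq_mul_inv, ← mul_assoc, mul_comm ((4:ℝ) ^ ((2*k)^2))]
      rw [mul_assoc, mul_comm ((p^2/8)^(2*k))]
      apply mul_lt_mul_of_pos_left _ hX
      -- goal : 4^((2k)^2) * n⁻¹ < (p^2/8)^(2k)
      have hq : (8/p^2) * (p^2/8) = 1 := by field_simp
      have hKp : K * (p^2/8)^(2*k) = 4^((2*k)^2) := by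
        rw [hK, mul_assoc, ← mul_pow, hq, one_pow, mul_one]
      have hq0 : (0:ℝ) < (p^2/8)^(2*k) := by positivity
      have h1 : K * (n:ℝ)⁻¹ < 1 := by
        rw [← div_eq_mul_inv, div_lt_one hn0]
        exact hKn
      calc 4^((2*k)^2) * (n:ℝ)⁻¹ = (p^2/8)^(2*k) * (K * (n:ℝ)⁻¹) := by
            rw [← hKp]; ring
        _ < (p^2/8)^(2*k) * 1 := mul_lt_mul_of_pos_left h1 hq0
        _ = (p^2/8)^(2*k) := mul_one _
    calc (Fintype.card ι : ℝ) * (4 ^ ((2*k) ^ 2) * (n : ℝ) ^ k)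
        ≤ 4 ^ ((2*k) ^ 2) * ((n:ℝ) ^ C' * (n:ℝ) ^ (k:ℝ)) := e2
      _ = 4 ^ ((2*k) ^ 2) * (n:ℝ) ^ (C' + (k:ℝ)) := by rw [e3]
      _ ≤ 4 ^ ((2*k) ^ 2) * (n:ℝ) ^ (((2:ℝ)/3) * (2*k : ℕ) - 1) :=
          mul_le_mul_of_nonneg_left e5 (by positivity)
      _ = 4 ^ ((2*k) ^ 2) * ((n:ℝ) ^ (((2:ℝ)/3) * (2*k : ℕ)) / n) := by rw [e6]
      _ < (p^2/8)^(2*k) * (n:ℝ) ^ (((2:ℝ)/3) * (2*k : ℕ)) := e7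
      _ = lam^(2*k) := e1.symm
  linarith [hcomb, hkey, htot, mul_le_mul_of_nonneg_left htot (pow_nonneg hlam0.le (2*k))]


lemma pair_eq_pair_iff {x y v u : Fin n} (hxy : x ≠ y) :
    ({v, u} : Finset (Fin n)) = {x, y} ↔ (v = x ∧ u = y) ∨ (v = y ∧ u = x) := by
  constructor
  · intro h
    have hv : v ∈ ({x, y} : Finset (Fin n)) := by rw [← h]; simp
    have hu : u ∈ ({x, y} : Finset (Fin n)) := by rw [← h]; simp
    have hx : x ∈ ({v, u} : Finset (Fin n)) := by rw [h]; simp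
    have hy : y ∈ ({v, u} : Finset (Fin n)) := by rw [h]; simp
    simp only [mem_insert, mem_singleton] at hv hu hx hy
    rcases hv with rfl | rfl <;> rcases hu with rfl | rfl <;> tauto
  · rintro (⟨rfl, rfl⟩ | ⟨rfl, rfl⟩)
    · rfl
    · exact Finset.pair_comm v u

lemma double_count (G : Finset (Finset (Fin n))) (hG : ∀ e ∈ G, e.card = 2)
    (R : Finset (Fin n)) :
    ∑ v ∈ R, (R.filter fun u => ({v, u} : Finset (Fin n)) ∈ G).card
      = 2 * (G.filter fun e => e ⊆ R).card := by
  classical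
  have h1 : ∀ v : Fin n, (R.filter fun u => ({v, u} : Finset (Fin n)) ∈ G).card
      = ∑ u ∈ R, ∑ e ∈ G, (if ({v, u} : Finset (Fin n)) = e then 1 else 0) := by
    intro v
    rw [Finset.card_filter]
    apply Finset.sum_congr rfl
    intro u _
    rw [Finset.sum_ite_eq G ({v, u} : Finset (Fin n)) (fun _ => 1)]
  have h2 : ∑ v ∈ R, (R.filter fun u => ({v, u} : Finset (Fin n)) ∈ G).card
      = ∑ e ∈ G, ∑ v ∈ R, ∑ u ∈ R, (if ({v, u} : Finset (Fin n)) = e then 1 else 0) := by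
    calc ∑ v ∈ R, (R.filter fun u => ({v, u} : Finset (Fin n)) ∈ G).card
        = ∑ v ∈ R, ∑ e ∈ G, ∑ u ∈ R, (if ({v, u} : Finset (Fin n)) = e then 1 else 0) :=
          Finset.sum_congr rfl (fun v _ => (h1 v).trans Finset.sum_comm)
      _ = ∑ e ∈ G, ∑ v ∈ R, ∑ u ∈ R, (if ({v, u} : Finset (Fin n)) = e then 1 else 0) :=
          Finset.sum_comm
  rw [h2]
  have h3 : ∀ e ∈ G, ∑ v ∈ R, ∑ u ∈ R, (if ({v, u} : Finset (Fin n)) = e then 1 else 0)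
      = if e ⊆ R then 2 else 0 := by
    intro e he
    obtain ⟨x, y, hxy, rfl⟩ := Finset.card_eq_two.mp (hG e he)
    have hsplit : ∀ v u : Fin n, (if ({v, u} : Finset (Fin n)) = {x, y} then (1:ℕ) else 0)
        = (if v = x ∧ u = y then 1 else 0) + (if v = y ∧ u = x then 1 else 0) := by
      intro v u
      rw [if_congr (pair_eq_pair_iff hxy) rfl rfl]
      by_cases h1 : v = x ∧ u = y
      · rw [if_pos (Or.inl h1), if_pos h1, if_neg (by rintro ⟨rfl, rfl⟩; exact hxy (h1.2 ▸ h1.1.symm ▸ rfl))]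
      · by_cases h2 : v = y ∧ u = x
        · rw [if_pos (Or.inr h2), if_neg h1, if_pos h2]
        · rw [if_neg (by tauto), if_neg h1, if_neg h2]
    have hone : ∀ (xx yy : Fin n), ∑ v ∈ R, ∑ u ∈ R,
        (if v = xx ∧ u = yy then (1:ℕ) else 0) = if xx ∈ R ∧ yy ∈ R then 1 else 0 := by
      intro xx yy
      have : ∀ v ∈ R, ∑ u ∈ R, (if v = xx ∧ u = yy then (1:ℕ) else 0)
          = if v = xx then (if yy ∈ R then 1 else 0) else 0 := by
        intro v _
        by_cases hv : v = xx
        · subst hv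
          rw [if_pos rfl]
          rw [Finset.sum_congr rfl (fun u _ => by
            rw [if_congr (show (v = v ∧ u = yy) ↔ (u = yy) by simp) rfl rfl])]
          rw [Finset.sum_ite_eq' R yy (fun _ => 1)]
        · rw [if_neg hv]
          apply Finset.sum_eq_zero
          intro u _
          rw [if_neg (by tauto)]
      rw [Finset.sum_congr rfl this, Finset.sum_ite_eq' R xx
        (fun _ => if yy ∈ R then (1:ℕ) else 0)]
      by_cases h1 : xx ∈ R <;> by_cases h2 : yy ∈ R <;> simp [h1, h2]
    have hsub : ({x, y} : Finset (Fin n)) ⊆ R ↔ x ∈ R ∧ y ∈ R := by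
      rw [Finset.insert_subset_iff, Finset.singleton_subset_iff]
    calc ∑ v ∈ R, ∑ u ∈ R, (if ({v, u} : Finset (Fin n)) = {x, y} then (1:ℕ) else 0)
        = ∑ v ∈ R, ∑ u ∈ R, ((if v = x ∧ u = y then (1:ℕ) else 0)
            + (if v = y ∧ u = x then 1 else 0)) := by
          apply Finset.sum_congr rfl; intro v _
          apply Finset.sum_congr rfl; intro u _
          exact hsplit v u
      _ = (if x ∈ R ∧ y ∈ R then 1 else 0) + (if y ∈ R ∧ x ∈ R then 1 else 0) := by
          rw [← hone x y, ← hone y x, ← Finset.sum_add_distrib]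
          apply Finset.sum_congr rfl; intro v _
          rw [← Finset.sum_add_distrib]
      _ = if ({x, y} : Finset (Fin n)) ⊆ R then 2 else 0 := by
          by_cases h1 : x ∈ R <;> by_cases h2 : y ∈ R <;>
            simp [h1, h2, hsub]
  rw [Finset.sum_congr rfl h3, Finset.sum_ite, Finset.sum_const, Finset.sum_const]
  simp [mul_comm]

lemma final_b (p dlt lam n r u al : ℝ)
    (hp0 : 0 < p) (hp1 : p ≤ 1) (hd0 : 0 < dlt) (hd1 : dlt ≤ 1)
    (hlam : lam = p^2/8 * dlt * n) (hn0 : 0 < n)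
    (hal : al ≤ 1) (hu0 : 0 ≤ u) (hr0 : 0 ≤ r) (hr2 : r ≤ p*n + lam)
    (hu : p * (al * n) - lam ≤ u) :
    (al - 2*dlt) * r ≤ u := by
  have hlam0 : 0 ≤ lam := by rw [hlam]; positivity
  rcases le_or_gt al (2*dlt) with hc | hc
  · nlinarith
  · have h1 : (al - 2*dlt) * r ≤ (al - 2*dlt) * (p*n + lam) := by nlinarith
    have h2 : (al - 2*dlt) * (p*n + lam) ≤ al * (p*n) + lam - 2*dlt*(p*n) := by nlinarith
    have h3 : 2 * lam ≤ 2 * dlt * (p * n) := by nlinarith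
    linarith

set_option maxHeartbeats 1000000 in
lemma final_c (p dlt lam n r g e β : ℝ)
    (hp0 : 0 < p) (hp1 : p ≤ 1) (hd0 : 0 < dlt) (hd1 : dlt ≤ 1)
    (hlam : lam = p^2/8 * dlt * n) (hpn : 8 ≤ p * n) (hdn : 1 ≤ dlt * n)
    (hβ1 : β ≤ 1) (hβ0 : 0 < β)
    (hr0 : 0 ≤ r) (hr1 : p*n - lam ≤ r) (hr2 : r ≤ p*n + lam)
    (hX : 0 ≤ r*(r-1)/2) (he0 : 0 ≤ e) (hg0 : 0 ≤ g)
    (hg : β * (n*(n-1)/2) ≤ g)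
    (he : p^2*g - (p*lam*n + lam*r)/2 ≤ e) :
    (β - 3*dlt) * (r*(r-1)/2) ≤ e := by
  have hn0 : (0:ℝ) < n := by nlinarith
  have hlam0 : 0 ≤ lam := by rw [hlam]; positivity
  rcases le_or_gt β (3*dlt) with hc | hc
  · nlinarith
  · have hpd : p * dlt ≤ 1 := by nlinarith
    have hlpn : lam ≤ p*n/8 := by
      rw [hlam]
      nlinarith [mul_pos hp0 hn0]
    have h2 : 7/8*(p*n) ≤ r := by linarith
    have h3 : 3/4*(p*n) ≤ r - 1 := by linarith
    have h4 : (7/8*(p*n))*(3/4*(p*n)) ≤ r*(r-1) :=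
      mul_le_mul h2 h3 (by linarith) (by linarith)
    have h5 : 63/64*(dlt*((p*n)*(p*n))) ≤ 3*dlt*(r*(r-1)/2) := by
      have := mul_le_mul_of_nonneg_left h4 (by positivity : (0:ℝ) ≤ 3*dlt/2)
      linarith
    have hrr : r*r ≤ (p*n+lam)*(p*n+lam) := mul_self_le_mul_self hr0 hr2
    have h6a : β*(r*(r-1)) ≤ β*(r*r) := by nlinarith [mul_nonneg hβ0.le hr0]
    have h6b : β*(r*r) ≤ β*((p*n+lam)*(p*n+lam)) := mul_le_mul_of_nonneg_left hrr hβ0.le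
    have hpnl : 0 ≤ (p*n)*lam := mul_nonneg (by positivity) hlam0
    have h6 : β*(r*(r-1)/2) ≤ β*((p*n)*(p*n))/2 + p*n*lam + lam^2/2 := by
      linarith [h6a, h6b, mul_nonneg (sub_nonneg.mpr hβ1) hpnl,
        mul_nonneg (sub_nonneg.mpr hβ1) (sq_nonneg lam)]
    have hgp : p^2*(β*(n*(n-1)/2)) ≤ p^2*g :=
      mul_le_mul_of_nonneg_left hg (sq_nonneg p)
    have hlr : lam * r ≤ lam * (p*n+lam) := mul_le_mul_of_nonneg_left hr2 hlam0
    have hp2d : p^2*dlt ≤ 1 := by nlinarith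
    -- key numeric inequality
    have h7 : 2*(p*n)*lam + lam^2 + p^2*β*n/2 ≤ 63/64*(dlt*((p*n)*(p*n))) := by
      have e1 : 2*(p*n)*lam ≤ 16/64 * (dlt*((p*n)*(p*n))) := by
        rw [hlam]
        nlinarith [mul_nonneg (mul_nonneg (mul_nonneg hd0.le (mul_self_nonneg p))
          (mul_self_nonneg n)) (sub_nonneg.mpr hp1)]
      have e2 : lam^2 ≤ 1/64 * (dlt*((p*n)*(p*n))) := by
        rw [hlam]
        nlinarith [mul_nonneg (mul_nonneg (mul_nonneg hd0.le (mul_self_nonneg p))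
          (mul_self_nonneg n)) (sub_nonneg.mpr hp2d), sq_nonneg (p*dlt*n)]
      have e3 : p^2*β*n/2 ≤ 32/64 * (dlt*((p*n)*(p*n))) := by
        have t3 : p^2*n/2 * 1 ≤ p^2*n/2 * (dlt*n) :=
          mul_le_mul_of_nonneg_left hdn (by positivity)
        nlinarith [t3, mul_nonneg (mul_nonneg (sq_nonneg p) hn0.le) (sub_nonneg.mpr hβ1)]
      linarith
    linarith [h5, h6, hgp, hlr, he, h7]

def degF (G : Finset (Finset (Fin n))) (v : Fin n) : ℕ :=
  ((univ : Finset (Fin n)).filter fun u => ({v, u} : Finset (Fin n)) ∈ G).card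

end Stmt3

open Stmt3 in
set_option maxHeartbeats 2000000 in
/-- existence of a reservoir set `R` inheriting proportions of
given large vertex subsets and dense graphs. -/
theorem stmt_3 (p C : ℝ) (hp0 : 0 < p) (hp1 : p < 1) (hC : 0 < C) :
    ∃ n₀ : ℕ, ∀ n : ℕ, n₀ ≤ n → ∀ s t : ℕ,
      (s : ℝ) ≤ (n : ℝ) ^ C → (t : ℝ) ≤ (n : ℝ) ^ C →
      ∀ (U : Fin s → Finset (Fin n)) (G : Fin t → Finset (Finset (Fin n)))
        (α : Fin s → ℝ) (β : Fin t → ℝ),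
        (∀ j : Fin t, ∀ e ∈ G j, e.card = 2) →
        (∀ i, 0 < α i ∧ α i < 1) →
        (∀ j, 0 < β j ∧ β j < 1) →
        (∀ i, α i * n ≤ ((U i).card : ℝ)) →
        (∀ j, β j * (n.choose 2 : ℝ) ≤ ((G j).card : ℝ)) →
        ∃ R : Finset (Fin n),
          |(R.card : ℝ) - p * n| ≤ p * (n : ℝ) ^ ((2 : ℝ)/3) ∧
          (∀ i, (α i - 2 * (n : ℝ) ^ (-(1 : ℝ)/3)) * R.card ≤ ((U i ∩ R).card : ℝ)) ∧
          (∀ j, (β j - 3 * (n : ℝ) ^ (-(1 : ℝ)/3)) * (R.card.choose 2 : ℝ) ≤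
            (((G j).filter fun e => e ⊆ R).card : ℝ)) := by
  classical
  obtain ⟨n₀', hcore⟩ := Stmt3.core p (C + 2) hp0 hp1
  refine ⟨max n₀' (max 3 (⌈(8:ℝ)/p⌉₊ + 1)), ?_⟩
  intro n hn s t hs ht U G α β hG2 hα hβ hU hGc
  have hn₀' : n₀' ≤ n := le_trans (le_max_left _ _) hn
  have hn3 : 3 ≤ n := le_trans ((le_max_left _ _).trans (le_max_right _ _)) hn
  have hn0 : (0:ℝ) < (n:ℝ) := by exact_mod_cast Nat.lt_of_lt_of_le (by norm_num) hn3
  have hn1 : (1:ℝ) ≤ (n:ℝ) := by exact_mod_cast (show (1:ℕ) ≤ n by omega)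
  have hpn8 : (8:ℝ) ≤ p * n := by
    have h1 : (⌈(8:ℝ)/p⌉₊ + 1 : ℕ) ≤ n := le_trans ((le_max_right _ _).trans (le_max_right _ _)) hn
    have h2 : (8:ℝ)/p ≤ (⌈(8:ℝ)/p⌉₊ : ℝ) := Nat.le_ceil _
    have h3 : ((⌈(8:ℝ)/p⌉₊ : ℝ) + 1) ≤ (n:ℝ) := by exact_mod_cast h1
    have h4 : (8:ℝ)/p ≤ (n:ℝ) := by linarith
    rw [div_le_iff₀ hp0] at h4
    linarith [h4]
  set dlt : ℝ := (n:ℝ) ^ (-(1:ℝ)/3) with hdlt_def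
  set lam : ℝ := p^2/8 * (n:ℝ)^((2:ℝ)/3) with hlam_def
  have hd0 : 0 < dlt := Real.rpow_pos_of_pos hn0 _
  have hd1 : dlt ≤ 1 := Real.rpow_le_one_of_one_le_of_nonpos hn1 (by norm_num)
  have hdn23 : dlt * (n:ℝ) = (n:ℝ)^((2:ℝ)/3) := by
    rw [hdlt_def, show ((2:ℝ)/3) = (-(1:ℝ)/3) + 1 by norm_num, Real.rpow_add hn0,
      Real.rpow_one]
  have hlam_eq : lam = p^2/8 * dlt * (n:ℝ) := by
    rw [hlam_def, ← hdn23, mul_assoc]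
  have hdn1 : 1 ≤ dlt * (n:ℝ) := by
    rw [hdn23, show (1:ℝ) = (n:ℝ) ^ (0:ℝ) from (Real.rpow_zero _).symm]
    exact Real.rpow_le_rpow_of_exponent_le hn1 (by norm_num)
  have hlam0 : 0 < lam := by
    rw [hlam_eq]; positivity
  -- index type and coefficient functions
  set a : ((Unit ⊕ Fin s) ⊕ (Fin t ⊕ Fin t × Fin n)) → Fin n → ℝ :=
    Sum.elim
      (Sum.elim (fun _ _ => 1) (fun i v => if v ∈ U i then 1 else 0))
      (Sum.elim (fun j v => (degF (G j) v : ℝ) / n)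
        (fun q v => if ({q.2, v} : Finset (Fin n)) ∈ G q.1 then 1 else 0)) with ha_def
  have hacard : (Fintype.card ((Unit ⊕ Fin s) ⊕ (Fin t ⊕ Fin t × Fin n)) : ℝ) ≤
      (n:ℝ) ^ (C + 2) := by
    have hcι : Fintype.card ((Unit ⊕ Fin s) ⊕ (Fin t ⊕ Fin t × Fin n)) = 1 + s + (t + t * n) := by
      simp [Fintype.card_sum, Fintype.card_prod]
    rw [hcι]
    have hnC1 : (1:ℝ) ≤ (n:ℝ)^C := by
      rw [show (1:ℝ) = (n:ℝ) ^ (0:ℝ) from (Real.rpow_zero _).symm]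
      exact Real.rpow_le_rpow_of_exponent_le hn1 hC.le
    have htn : ((t * n : ℕ) : ℝ) ≤ (n:ℝ)^C * n := by
      push_cast
      exact mul_le_mul_of_nonneg_right ht hn0.le
    have hsplit : (n:ℝ) ^ (C + 2) = (n:ℝ)^C * ((n:ℝ) * (n:ℝ)) := by
      rw [Real.rpow_add hn0, show ((2:ℝ)) = ((2:ℕ):ℝ) by norm_num, Real.rpow_natCast]
      ring
    have hn3' : (3:ℝ) ≤ (n:ℝ) := by exact_mod_cast hn3
    have key : (1:ℝ) + s + (t + t*n) ≤ (n:ℝ)^C * ((n:ℝ) * (n:ℝ)) := by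
      have h1 : (1:ℝ) + s + (t + t*n) ≤ (n:ℝ)^C + (n:ℝ)^C + ((n:ℝ)^C + (n:ℝ)^C * n) := by
        push_cast at htn ⊢
        linarith [hs, ht, htn]
      have h2 : (n:ℝ)^C + (n:ℝ)^C + ((n:ℝ)^C + (n:ℝ)^C * n) = (n:ℝ)^C * (3 + n) := by ring
      have h3 : (n:ℝ)^C * (3 + n) ≤ (n:ℝ)^C * ((n:ℝ) * (n:ℝ)) := by
        apply mul_le_mul_of_nonneg_left _ (by linarith)
        nlinarith
      linarith
    rw [hsplit]
    push_cast at key ⊢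
    linarith
  have hab : ∀ l v, 0 ≤ a l v ∧ a l v ≤ 1 := by
    rintro (⟨⟨⟩ | i⟩ | ⟨j | ⟨j, v₀⟩⟩) v <;> rw [ha_def] <;> simp only [Sum.elim_inl, Sum.elim_inr]
    · norm_num
    · split <;> norm_num
    · constructor
      · positivity
      · rw [div_le_one hn0]
        have : degF (G j) v ≤ n := by
          calc degF (G j) v
              ≤ (univ : Finset (Fin n)).card := Finset.card_filter_le _ _
            _ = n := by rw [card_univ, Fintype.card_fin]
        exact_mod_cast this
    · split <;> norm_num
  obtain ⟨R, hR⟩ := hcore n hn₀' _ inferInstance a hacard hab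
  -- event (1): size of R
  have ev1 : |(R.card : ℝ) - p * n| ≤ lam := by
    have h := hR (Sum.inl (Sum.inl ()))
    rw [ha_def] at h
    simpa using h
  -- events (2): subsets
  have ev2 : ∀ i, p * ((U i).card : ℝ) - lam ≤ ((U i ∩ R).card : ℝ) := by
    intro i
    have h := hR (Sum.inl (Sum.inr i))
    rw [ha_def] at h
    simp only [Sum.elim_inl, Sum.elim_inr] at h
    rw [Finset.sum_boole, Finset.sum_boole, Finset.filter_mem_eq_inter,
      Finset.filter_mem_eq_inter, univ_inter, inter_comm R (U i), ← hlam_def] at h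
    have := abs_le.mp h
    linarith [this.1]
  -- events (3): degree sums
  have ev3 : ∀ j, p * ∑ v, (degF (G j) v : ℝ) - lam * n ≤ ∑ v ∈ R, (degF (G j) v : ℝ) := by
    intro j
    have h := hR (Sum.inr (Sum.inl j))
    rw [ha_def] at h
    simp only [Sum.elim_inl, Sum.elim_inr] at h
    rw [← Finset.sum_div, ← Finset.sum_div] at h
    have heq : (∑ v ∈ R, (degF (G j) v : ℝ)) / n - p * ((∑ v, (degF (G j) v : ℝ)) / n) =
        ((∑ v ∈ R, (degF (G j) v : ℝ)) - p * (∑ v, (degF (G j) v : ℝ))) / n := by ring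
    rw [heq, abs_div, abs_of_pos hn0, div_le_iff₀ hn0, ← hlam_def] at h
    linarith [(abs_le.mp h).1]
  -- events (4): neighbourhoods
  have ev4 : ∀ (j : Fin t) (v : Fin n), p * (degF (G j) v : ℝ) - lam ≤
      ((R.filter fun u => ({v, u} : Finset (Fin n)) ∈ G j).card : ℝ) := by
    intro j v
    have h := hR (Sum.inr (Sum.inr (j, v)))
    rw [ha_def] at h
    simp only [Sum.elim_inl, Sum.elim_inr] at h
    rw [Finset.sum_boole, Finset.sum_boole, ← hlam_def] at h
    have hdv : ((univ : Finset (Fin n)).filter fun u => ({v, u} : Finset (Fin n)) ∈ G j).card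
        = degF (G j) v := rfl
    rw [hdv] at h
    linarith [(abs_le.mp h).1]
  -- handshake
  have hdsum : ∀ j, ∑ v, (degF (G j) v : ℝ) = 2 * ((G j).card : ℝ) := by
    intro j
    have h := double_count (G j) (hG2 j) (univ : Finset (Fin n))
    rw [Finset.filter_true_of_mem (fun e _ => Finset.subset_univ e)] at h
    have h2 : ∑ v, degF (G j) v = 2 * (G j).card := h
    exact_mod_cast h2
  have hr1 : p * n - lam ≤ (R.card : ℝ) := by linarith [(abs_le.mp ev1).1]
  have hr2 : (R.card : ℝ) ≤ p * n + lam := by linarith [(abs_le.mp ev1).2]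
  refine ⟨R, ?_, ?_, ?_⟩
  · -- (a)
    have hll : lam ≤ p * (n:ℝ)^((2:ℝ)/3) := by
      rw [hlam_def]
      have hX : (0:ℝ) < (n:ℝ)^((2:ℝ)/3) := Real.rpow_pos_of_pos hn0 _
      nlinarith [hX.le]
    exact ev1.trans hll
  · -- (b)
    intro i
    apply final_b p dlt lam n (R.card : ℝ) _ (α i) hp0 hp1.le hd0 hd1 hlam_eq hn0
      (hα i).2.le (Nat.cast_nonneg _) (Nat.cast_nonneg _) hr2
    have h1 := ev2 i
    have h2 : p * (α i * n) ≤ p * ((U i).card : ℝ) :=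
      mul_le_mul_of_nonneg_left (hU i) hp0.le
    linarith
  · -- (c)
    intro j
    set g : ℝ := ((G j).card : ℝ) with hg_def
    set e : ℝ := (((G j).filter fun e => e ⊆ R).card : ℝ) with he_def
    have hdc : (∑ v ∈ R, ((R.filter fun u => ({v, u} : Finset (Fin n)) ∈ G j).card : ℝ))
        = 2 * e := by
      rw [he_def]
      exact_mod_cast congrArg (Nat.cast : ℕ → ℝ) (double_count (G j) (hG2 j) R)
    have hsum1 : ∑ v ∈ R, (p * (degF (G j) v : ℝ) - lam) ≤ 2 * e := by
      rw [← hdc]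
      exact Finset.sum_le_sum (fun v _ => ev4 j v)
    have hsum2 : ∑ v ∈ R, (p * (degF (G j) v : ℝ) - lam)
        = p * (∑ v ∈ R, (degF (G j) v : ℝ)) - lam * R.card := by
      rw [Finset.sum_sub_distrib, ← Finset.mul_sum, Finset.sum_const, nsmul_eq_mul]
      ring
    have he : p^2 * g - (p * lam * n + lam * (R.card : ℝ))/2 ≤ e := by
      have h3 : p * (p * (∑ v, (degF (G j) v : ℝ)) - lam * n) ≤ p * (∑ v ∈ R, (degF (G j) v : ℝ)) :=
        mul_le_mul_of_nonneg_left (ev3 j) hp0.le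
      rw [hdsum j] at h3
      linarith [hsum1, hsum2, h3]
    have hgc := hGc j
    rw [Nat.cast_choose_two] at hgc
    have hX : (0:ℝ) ≤ (R.card : ℝ) * ((R.card : ℝ) - 1)/2 := by
      rw [← Nat.cast_choose_two]
      positivity
    rw [Nat.cast_choose_two]
    exact final_c p dlt lam n (R.card : ℝ) g e (β j) hp0 hp1.le hd0 hd1 hlam_eq hpn8 hdn1
      (hβ j).2.le (hβ j).1 (Nat.cast_nonneg _) hr1 hr2 hX (Nat.cast_nonneg _)
      (Nat.cast_nonneg _) hgc he
end

section
/- For all s, t ∈ ℕ and α ∈ (0,1) the following holds for sufficiently large n. Let m ≤ n^s and let A₁,…,A_m ⊂ [n]^t be families of t-tuples of elements of [n] with |A_i| ≥ 4α·t²·n^t for every i ∈ [m]. Then there exists a family F ⊂ A₁ ∪ ⋯ ∪ A_m of t-tuples such that |F| ≤ αn, any two distinct t-tuples in F are disjoint (no element of [n] occurs in both), and |F ∩ A_i| ≥ α²·t²·n/4 for every i ∈ [m]. -/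
open Finset
open scoped Classical


lemma aux_log (a b c : ℝ) (hc : 0 < c) :
    ∃ n₀ : ℕ, ∀ n : ℕ, n₀ ≤ n → a * Real.log n + b < c * n := by
  obtain ⟨n₀, hn₀⟩ := exists_nat_gt (max (max ((4*|a|/c)^2) (2*|b|/c + 1)) 1)
  refine ⟨n₀, fun n hn => ?_⟩
  have hM : (max (max ((4*|a|/c)^2) (2*|b|/c + 1)) 1 : ℝ) < n :=
    lt_of_lt_of_le hn₀ (by exact_mod_cast Nat.cast_le.2 hn)
  have hn1 : (1:ℝ) ≤ n := le_of_lt (lt_of_le_of_lt (le_max_right _ _) hM)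
  have hlog : Real.log n ≤ 2 * Real.sqrt n := by
    have h1 : Real.log n = 2 * Real.log (Real.sqrt n) := by
      rw [Real.log_sqrt (by linarith)]; ring
    have h2 : Real.log (Real.sqrt n) ≤ Real.sqrt n - 1 :=
      Real.log_le_sub_one_of_pos (Real.sqrt_pos.2 (by linarith))
    nlinarith [Real.sqrt_nonneg (n:ℝ)]
  have hs : 4*|a|/c ≤ Real.sqrt n := by
    have h1 : ((4*|a|/c)^2 : ℝ) ≤ n :=
      le_of_lt (lt_of_le_of_lt (le_trans (le_max_left _ _) (le_max_left _ _)) hM)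
    have := Real.sqrt_le_sqrt h1
    rwa [Real.sqrt_sq (by positivity)] at this
  have ha : a * Real.log n ≤ c/2 * n := by
    have h0 : (0:ℝ) ≤ Real.log n := Real.log_nonneg hn1
    have h1 : a * Real.log n ≤ |a| * (2 * Real.sqrt n) := by
      calc a * Real.log n ≤ |a| * Real.log n := by
            exact mul_le_mul_of_nonneg_right (le_abs_self a) h0
        _ ≤ |a| * (2 * Real.sqrt n) := by
            exact mul_le_mul_of_nonneg_left hlog (abs_nonneg a)
      
    have h2 : |a| * (2 * Real.sqrt n) ≤ c/2 * n := by
      have hsq : Real.sqrt n * Real.sqrt n = n := Real.mul_self_sqrt (by linarith)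
      have h4 : 4*|a| ≤ Real.sqrt n * c := (div_le_iff₀ hc).1 hs
      nlinarith [Real.sqrt_nonneg (n:ℝ),
        mul_le_mul_of_nonneg_right h4 (Real.sqrt_nonneg (n:ℝ))]
    linarith
  have hb : b < c/2 * n := by
    have h1 : (2*|b|/c + 1 : ℝ) < n :=
      lt_of_le_of_lt (le_trans (le_max_right _ _) (le_max_left _ _)) hM
    have : 2*|b|/c < n := by linarith
    have h2 : 2*|b| < c * n := by
      have := (div_lt_iff₀ hc).1 this
      linarith [this]
    have := le_abs_self b
    linarith
  linarith


def Valid (n t : ℕ) {k : ℕ} (g : Fin k → (Fin t → Fin n)) : Prop :=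
  (∀ j, Function.Injective (g j)) ∧ ∀ j₁ j₂, j₁ ≠ j₂ → ∀ p q, g j₁ p ≠ g j₂ q

lemma valid_cons {n t k : ℕ} (x : Fin t → Fin n) (g : Fin k → (Fin t → Fin n)) :
    Valid n t (Fin.cons x g) ↔
      Valid n t g ∧ Function.Injective x ∧ (∀ p j q, x p ≠ g j q) := by
  constructor
  · rintro ⟨h1, h2⟩
    refine ⟨⟨?_, ?_⟩, ?_, ?_⟩
    · intro j
      have := h1 j.succ; simpa using this
    · intro j₁ j₂ hne p q
      have := h2 j₁.succ j₂.succ (by simpa [Fin.succ_inj] using hne) p q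
      simpa using this
    · have := h1 0; simpa using this
    · intro p j q
      have := h2 0 j.succ (Ne.symm (Fin.succ_ne_zero j)) p q
      simpa using this
  · rintro ⟨⟨hg1, hg2⟩, hx, hd⟩
    constructor
    · intro j
      induction j using Fin.cases with
      | zero => simpa using hx
      | succ j => simpa using hg1 j
    · intro j₁ j₂ hne p q
      induction j₁ using Fin.cases with
      | zero =>
        induction j₂ using Fin.cases with
        | zero => exact absurd rfl hne
        | succ j₂ => simpa using hd p j₂ q
      | succ j₁ =>
        induction j₂ using Fin.cases with
        | zero => simpa using (hd q j₁ p).symm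
        | succ j₂ =>
          have : j₁ ≠ j₂ := fun h => hne (by rw [h])
          simpa using hg2 j₁ j₂ this p q

lemma ext_count {n t k : ℕ} (g : Fin k → (Fin t → Fin n))
    (hg : Valid n t g) :
    (univ.filter (fun x : Fin t → Fin n =>
        Function.Injective x ∧ ∀ p j q, x p ≠ g j q)).card
      = (n - k * t).descFactorial t := by
  set U : Finset (Fin n) := image (fun jq : Fin k × Fin t => g jq.1 jq.2) univ with hU
  have hUinj : Function.Injective (fun jq : Fin k × Fin t => g jq.1 jq.2) := by
    rintro ⟨j1, q1⟩ ⟨j2, q2⟩ h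
    simp only at h
    by_cases hj : j1 = j2
    · subst hj
      exact Prod.ext_iff.mpr ⟨rfl, hg.1 j1 h⟩
    · exact absurd h (hg.2 j1 j2 hj q1 q2)
  have hUcard : U.card = k * t := by
    rw [hU, card_image_of_injective _ hUinj, card_univ]
    simp [Fintype.card_prod]
  set S : Finset (Fin n) := univ \ U with hS
  have hScard : S.card = n - k * t := by
    rw [hS, card_sdiff_of_subset (subset_univ U), card_univ, hUcard]
    simp
  have hmemS : ∀ y : Fin n, y ∈ S ↔ ∀ j q, g j q ≠ y := by
    intro y
    constructor
    · intro hy j q hq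
      rw [hS, mem_sdiff] at hy
      exact hy.2 (by rw [hU]; exact mem_image.2 ⟨(j,q), mem_univ _, hq⟩)
    · intro h
      rw [hS, mem_sdiff]
      refine ⟨mem_univ _, fun hy => ?_⟩
      obtain ⟨⟨j,q⟩, -, hq⟩ := mem_image.1 (by rwa [hU] at hy)
      exact h j q hq
  have hScard2 : Fintype.card {y // y ∈ S} = n - k * t := by
    rw [Fintype.card_coe]; exact hScard
  have key : (univ.filter (fun x : Fin t → Fin n =>
        Function.Injective x ∧ ∀ p j q, x p ≠ g j q)).card
      = Fintype.card (Fin t ↪ {y // y ∈ S}) := by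
    apply Finset.card_eq_of_equiv_fintype
    refine ⟨fun x => ⟨fun p => ⟨x.1 p, ?_⟩, ?_⟩, fun e => ⟨fun p => (e p).1, ?_⟩, ?_, ?_⟩
    · have hx := (mem_filter.1 x.2).2
      exact (hmemS (x.1 p)).2 (fun j q hq => hx.2 p j q hq.symm)
    · intro p1 p2 h
      have hx := (mem_filter.1 x.2).2
      exact hx.1 (by simpa using congrArg Subtype.val h)
    · refine mem_filter.2 ⟨mem_univ _, fun p1 p2 h => e.injective (Subtype.ext h), ?_⟩
      intro p j q
      exact fun h => ((hmemS (e p).1).1 (e p).2 j q h.symm)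
    · intro x; ext p; rfl
    · intro e; ext p; rfl
  rw [key, Fintype.card_embedding_eq, hScard2]
  simp





noncomputable def W {n t : ℕ} (B : Finset (Fin t → Fin n)) {k : ℕ}
    (g : Fin k → (Fin t → Fin n)) : ℝ :=
  ∏ j, (if g j ∈ B then (1:ℝ) else 2)

noncomputable def SS {n t : ℕ} (B : Finset (Fin t → Fin n)) (k : ℕ) : ℝ :=
  ∑ g : Fin k → (Fin t → Fin n), (if Valid n t g then W B g else 0)

noncomputable def CC (n t k : ℕ) : ℝ :=
  ∑ g : Fin k → (Fin t → Fin n), (if Valid n t g then (1:ℝ) else 0)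

lemma W_nonneg {n t k : ℕ} (B : Finset (Fin t → Fin n)) (g : Fin k → (Fin t → Fin n)) :
    0 ≤ W B g := by
  apply Finset.prod_nonneg
  intro j _
  split <;> norm_num

lemma sum_cons_eq {n t k : ℕ} (f : (Fin (k+1) → (Fin t → Fin n)) → ℝ) :
    ∑ g' : Fin (k+1) → (Fin t → Fin n), f g'
      = ∑ g : Fin k → (Fin t → Fin n), ∑ x : Fin t → Fin n, f (Fin.cons x g) := by
  rw [← Equiv.sum_comp (Fin.consEquiv (fun _ => Fin t → Fin n)) f, Fintype.sum_prod_type]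
  rw [Finset.sum_comm]
  rfl

lemma W_cons {n t k : ℕ} (B : Finset (Fin t → Fin n)) (x : Fin t → Fin n)
    (g : Fin k → (Fin t → Fin n)) :
    W B (Fin.cons x g) = (if x ∈ B then (1:ℝ) else 2) * W B g := by
  rw [W, Fin.prod_univ_succ]
  simp [W]

lemma CC_zero (n t : ℕ) : CC n t 0 = 1 := by
  rw [CC]
  rw [Fintype.sum_eq_single (fun j => j.elim0)]
  · rw [if_pos ⟨fun j => j.elim0, fun j => j.elim0⟩]
  · intro g hg
    exact absurd (funext fun j => j.elim0) (Ne.symm hg)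

lemma SS_zero {n t : ℕ} (B : Finset (Fin t → Fin n)) : SS B 0 = 1 := by
  rw [SS]
  rw [Fintype.sum_eq_single (fun j => j.elim0)]
  · rw [if_pos ⟨fun j => j.elim0, fun j => j.elim0⟩, W]
    simp
  · intro g hg
    exact absurd (funext fun j => j.elim0) (Ne.symm hg)

lemma CC_succ (n t k : ℕ) :
    CC n t (k+1) = ((n - k*t).descFactorial t : ℝ) * CC n t k := by
  rw [CC, sum_cons_eq, CC, Finset.mul_sum]
  apply Finset.sum_congr rfl
  intro g _
  by_cases hgv : Valid n t g
  · rw [if_pos hgv]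
    have h1 : ∀ x : Fin t → Fin n,
        (if Valid n t (Fin.cons x g) then (1:ℝ) else 0)
        = if (Function.Injective x ∧ ∀ p j q, x p ≠ g j q) then (1:ℝ) else 0 := by
      intro x
      by_cases h : Function.Injective x ∧ ∀ p j q, x p ≠ g j q
      · rw [if_pos h, if_pos ((valid_cons x g).2 ⟨hgv, h⟩)]
      · rw [if_neg h, if_neg (fun hc => h ((valid_cons x g).1 hc).2)]
    rw [Finset.sum_congr rfl (fun x _ => h1 x), Finset.sum_boole, ext_count g hgv]
    ring
  · rw [if_neg hgv]
    rw [Finset.sum_eq_zero, mul_zero]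
    intro x _
    rw [if_neg (fun hc => hgv ((valid_cons x g).1 hc).1)]

lemma SS_succ_le {n t k : ℕ} (B : Finset (Fin t → Fin n)) (r : ℝ) (hr0 : 0 ≤ r) (hr2 : r ≤ 2)
    (hgood : ∀ g : Fin k → (Fin t → Fin n), Valid n t g →
      r * ((n - k*t).descFactorial t : ℝ)
        ≤ ((univ.filter (fun x : Fin t → Fin n =>
            x ∈ B ∧ Function.Injective x ∧ ∀ p j q, x p ≠ g j q)).card : ℝ)) :
    SS B (k+1) ≤ (2 - r) * ((n - k*t).descFactorial t : ℝ) * SS B k := by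
  set E : ℝ := ((n - k*t).descFactorial t : ℝ) with hE
  rw [SS, sum_cons_eq]
  have key : ∀ g : Fin k → (Fin t → Fin n),
      (∑ x : Fin t → Fin n, if Valid n t (Fin.cons x g) then W B (Fin.cons x g) else 0)
        ≤ (2 - r) * E * (if Valid n t g then W B g else 0) := by
    intro g
    by_cases hgv : Valid n t g
    · rw [if_pos hgv]
      have h1 : ∀ x : Fin t → Fin n,
          (if Valid n t (Fin.cons x g) then W B (Fin.cons x g) else 0)
          = (2 * (if (Function.Injective x ∧ ∀ p j q, x p ≠ g j q) then (1:ℝ) else 0)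
             - (if (x ∈ B ∧ Function.Injective x ∧ ∀ p j q, x p ≠ g j q) then (1:ℝ) else 0))
            * W B g := by
        intro x
        by_cases h : Function.Injective x ∧ ∀ p j q, x p ≠ g j q
        · rw [if_pos ((valid_cons x g).2 ⟨hgv, h⟩), W_cons, if_pos h]
          by_cases hB : x ∈ B
          · rw [if_pos hB, if_pos ⟨hB, h⟩]; ring
          · rw [if_neg hB, if_neg (fun hc => hB hc.1)]; ring
        · rw [if_neg (fun hc => h ((valid_cons x g).1 hc).2), if_neg h,
            if_neg (fun hc => h hc.2)]
          ring
      rw [Finset.sum_congr rfl (fun x _ => h1 x), ← Finset.sum_mul]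
      have h2 : (∑ x : Fin t → Fin n,
          (2 * (if (Function.Injective x ∧ ∀ p j q, x p ≠ g j q) then (1:ℝ) else 0)
             - (if (x ∈ B ∧ Function.Injective x ∧ ∀ p j q, x p ≠ g j q) then (1:ℝ) else 0)))
          ≤ (2 - r) * E := by
        rw [Finset.sum_sub_distrib, ← Finset.mul_sum, Finset.sum_boole, Finset.sum_boole,
          ext_count g hgv]
        have := hgood g hgv
        rw [← hE]
        nlinarith [this]
      exact mul_le_mul_of_nonneg_right h2 (W_nonneg B g) |>.trans_eq rfl
    · rw [if_neg hgv, mul_zero]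
      rw [Finset.sum_eq_zero]
      intro x _
      rw [if_neg (fun hc => hgv ((valid_cons x g).1 hc).1)]
  calc ∑ g : Fin k → (Fin t → Fin n), ∑ x : Fin t → Fin n,
        (if Valid n t (Fin.cons x g) then W B (Fin.cons x g) else 0)
      ≤ ∑ g : Fin k → (Fin t → Fin n),
          (2 - r) * E * (if Valid n t g then W B g else 0) :=
        Finset.sum_le_sum (fun g _ => key g)
    _ = (2 - r) * E * SS B k := by rw [SS, ← Finset.mul_sum]


lemma good_count {n t k : ℕ} (B : Finset (Fin t → Fin n)) (g : Fin k → (Fin t → Fin n))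
    (hg : Valid n t g) :
    B.card + (n - k*t).descFactorial t
      ≤ n^t + (univ.filter (fun x : Fin t → Fin n =>
          x ∈ B ∧ Function.Injective x ∧ ∀ p j q, x p ≠ g j q)).card := by
  set P : (Fin t → Fin n) → Prop :=
    fun x => Function.Injective x ∧ ∀ p j q, x p ≠ g j q with hP
  have e1 : univ.filter (fun x => x ∈ B ∧ P x) = B.filter P := by
    ext x; simp [mem_filter]
  have e2 : (B.filter P).card + (B.filter (fun x => ¬ P x)).card = B.card :=
    card_filter_add_card_filter_not _
  have e3 : (B.filter (fun x => ¬ P x)).card ≤ (univ.filter (fun x => ¬ P x)).card :=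
    card_le_card (filter_subset_filter _ (subset_univ _))
  have e4 : (univ.filter P).card + (univ.filter (fun x => ¬ P x)).card
      = Fintype.card (Fin t → Fin n) := by
    rw [card_filter_add_card_filter_not, card_univ]
  have e5 : (univ.filter P).card = (n - k*t).descFactorial t := ext_count g hg
  have e6 : Fintype.card (Fin t → Fin n) = n ^ t := by simp [Fintype.card_fun]
  rw [e1]
  omega

set_option maxHeartbeats 3000000 in
/-- selection of a small family of pairwise disjoint `t`-tuples
hitting each given large family of `t`-tuples many times. -/
theorem stmt_4 (s t : ℕ) (α : ℝ) (hα0 : 0 < α) (hα1 : α < 1) :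
    ∃ n₀ : ℕ, ∀ n : ℕ, n₀ ≤ n → ∀ m : ℕ, m ≤ n ^ s →
      ∀ A : Fin m → Finset (Fin t → Fin n),
        (∀ i, 4 * α * (t : ℝ)^2 * (n : ℝ)^t ≤ ((A i).card : ℝ)) →
        ∃ F : Finset (Fin t → Fin n),
          F ⊆ Finset.univ.biUnion A ∧
          (F.card : ℝ) ≤ α * n ∧
          (∀ f ∈ F, ∀ g ∈ F, f ≠ g → ∀ i j : Fin t, f i ≠ g j) ∧
          (∀ i, α^2 * (t : ℝ)^2 * n / 4 ≤ ((F ∩ A i).card : ℝ)) := by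
  rcases Nat.eq_zero_or_pos t with rfl | ht
  · refine ⟨1, fun n hn m hm A hA => ⟨∅, empty_subset _, ?_, by simp, fun i => ?_⟩⟩
    · simp only [card_empty, Nat.cast_zero]
      positivity
    · simp
  obtain ⟨n₁, hn₁⟩ := aux_log s (Real.log 2 + α * t^2) (α^2 * t^2 / 2)
    (by have : (0:ℝ) < t := by exact_mod_cast ht
        positivity)
  refine ⟨max n₁ 1, fun n hn m hm A hA => ?_⟩
  have hn1 : 1 ≤ n := le_trans (le_max_right _ _) hn
  have hnn₁ : n₁ ≤ n := le_trans (le_max_left _ _) hn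
  rcases Nat.eq_zero_or_pos m with rfl | hm0
  · refine ⟨∅, empty_subset _, ?_, by simp, fun i => i.elim0⟩
    simp only [card_empty, Nat.cast_zero]
    positivity
  -- main case
  have htR : (1:ℝ) ≤ t := by exact_mod_cast ht
  have hnR : (1:ℝ) ≤ n := by exact_mod_cast hn1
  set q : ℝ := α * (t:ℝ)^2 with hqdef
  have hq0 : 0 < q := by positivity
  have hntpos : (0:ℝ) < (n:ℝ)^t := by positivity
  have hcardA : ∀ i, ((A i).card : ℝ) ≤ (n:ℝ)^t := by
    intro i
    have h1 : (A i).card ≤ Fintype.card (Fin t → Fin n) := Finset.card_le_univ _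
    have h2 : Fintype.card (Fin t → Fin n) = n ^ t := by
      simp [Fintype.card_fun]
    rw [h2] at h1
    exact_mod_cast h1
  have hq1 : 4 * q ≤ 1 := by
    have h1 := hA ⟨0, hm0⟩
    have h2 := hcardA ⟨0, hm0⟩
    have h3 : 4 * q * (n:ℝ)^t ≤ (n:ℝ)^t := by
      rw [hqdef]; linarith [h1, h2]
    nlinarith [hntpos, h3]
  have hαt : α * t ≤ 1/4 := by
    have h1 : α * t ≤ q := by
      rw [hqdef]; nlinarith [hα0.le, htR]
    linarith
  set K := ⌊α * n⌋₊ with hKdef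
  have hK_le : (K:ℝ) ≤ α * n := Nat.floor_le (by positivity)
  have hK_gt : α * n < K + 1 := Nat.lt_floor_add_one _
  clear_value K
  have hKt_n : K * t ≤ n := by
    have h1 : ((K * t : ℕ):ℝ) ≤ (n:ℝ) := by
      push_cast
      calc (K:ℝ) * t ≤ (α * n) * t := by
            exact mul_le_mul_of_nonneg_right hK_le (by positivity)
        _ = (α * t) * n := by ring
        _ ≤ (1/4) * n := by nlinarith [hαt, hnR]
        _ ≤ n := by linarith
    exact_mod_cast h1
  have hE_le : ∀ k : ℕ, ((n - k*t).descFactorial t : ℝ) ≤ (n:ℝ)^t := by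
    intro k
    have h1 : (n - k*t).descFactorial t ≤ (n - k*t)^t := Nat.descFactorial_le_pow _ _
    have h2 : (n - k*t)^t ≤ n^t := Nat.pow_le_pow_left (Nat.sub_le _ _) _
    have := le_trans h1 h2
    exact_mod_cast this
  have hE_ge : ∀ k : ℕ, k < K → (1 - q) * (n:ℝ)^t ≤ ((n - k*t).descFactorial t : ℝ) := by
    intro k hk
    have hk1t : (k+1)*t ≤ n := le_trans (Nat.mul_le_mul_right t hk) hKt_n
    have h1 : (n - (k+1)*t)^t ≤ (n - k*t).descFactorial t := by
      refine le_trans (Nat.pow_le_pow_left ?_ t) (Nat.pow_sub_le_descFactorial _ _)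
      have h0 : (k+1)*t = k*t + t := by ring
      omega
    have h2 : ((n - (k+1)*t : ℕ):ℝ) = (n:ℝ) - (k+1)*t := by
      push_cast [Nat.cast_sub hk1t]
      ring
    have h3 : (n:ℝ) - (k+1)*t ≥ (1 - α*t) * n := by
      have hkK : ((k+1 : ℕ):ℝ) ≤ (K:ℝ) := by exact_mod_cast hk
      have : ((k+1:ℕ):ℝ) * t ≤ (K:ℝ) * t :=
        mul_le_mul_of_nonneg_right hkK (by positivity)
      have h4 : (K:ℝ) * t ≤ α * n * t := mul_le_mul_of_nonneg_right hK_le (by positivity)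
      push_cast at this
      nlinarith
    have h5 : (0:ℝ) ≤ 1 - α*t := by linarith
    have h6 : ((1 - α*t) * n)^t ≤ ((n:ℝ) - (k+1)*t)^t := by
      apply pow_le_pow_left₀ (by positivity) h3
    have h7 : (1 - q) * (n:ℝ)^t ≤ ((1 - α*t) * n)^t := by
      rw [mul_pow]
      have h8 : 1 - q ≤ (1 - α*t)^t := by
        have h := one_add_mul_le_pow (a := -(α*t)) (by linarith) t
        have e : (1 + -(α*t)) = 1 - α*t := by ring
        rw [e] at h
        have e2 : 1 + (t:ℝ) * -(α*t) = 1 - q := by rw [hqdef]; ring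
        linarith [h]
      exact mul_le_mul_of_nonneg_right h8 (by positivity)
    calc (1 - q) * (n:ℝ)^t ≤ ((1 - α*t) * n)^t := h7
      _ ≤ ((n:ℝ) - (k+1)*t)^t := h6
      _ = ((n - (k+1)*t : ℕ):ℝ)^t := by rw [h2]
      _ ≤ ((n - k*t).descFactorial t : ℝ) := by exact_mod_cast h1
  have hq14 : q ≤ 1/4 := by linarith
  have hE_pos : ∀ k : ℕ, k < K → (0:ℝ) < ((n - k*t).descFactorial t : ℝ) := by
    intro k hk
    have := hE_ge k hk
    nlinarith [hntpos]
  -- good count bound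
  have hgood : ∀ i : Fin m, ∀ k : ℕ, k < K → ∀ g : Fin k → (Fin t → Fin n), Valid n t g →
      (2*q) * ((n - k*t).descFactorial t : ℝ)
        ≤ ((univ.filter (fun x : Fin t → Fin n =>
            x ∈ A i ∧ Function.Injective x ∧ ∀ p j q, x p ≠ g j q)).card : ℝ) := by
    intro i k hk g hg
    have h0 := good_count (A i) g hg
    have c0 : ((A i).card : ℝ) + ((n - k*t).descFactorial t : ℝ)
        ≤ (n:ℝ)^t + ((univ.filter (fun x : Fin t → Fin n =>
            x ∈ A i ∧ Function.Injective x ∧ ∀ p j q, x p ≠ g j q)).card : ℝ) := by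
      exact_mod_cast h0
    have hAi' : 4 * q * (n:ℝ)^t ≤ ((A i).card : ℝ) := by
      have h1 := hA i; rw [hqdef]; linarith [h1]
    have hEk := hE_ge k hk
    have hEk' := hE_le k
    have p1 : 2*q*((n - k*t).descFactorial t : ℝ) ≤ 2*q*(n:ℝ)^t :=
      mul_le_mul_of_nonneg_left hEk' (by positivity)
    have p2 : (n:ℝ)^t - ((n - k*t).descFactorial t : ℝ) ≤ q*(n:ℝ)^t := by linarith [hEk]
    have p3 : (0:ℝ) ≤ q*(n:ℝ)^t := by positivity
    linarith [c0, hAi', p1, p2, p3]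
  -- SS bound by induction
  have hSSle : ∀ k : ℕ, k ≤ K → ∀ i : Fin m,
      SS (A i) k ≤ (2 - 2*q)^k * CC n t k := by
    intro k
    induction k with
    | zero => intro _ i; rw [SS_zero, CC_zero, pow_zero, one_mul]
    | succ k ih =>
      intro hk i
      have hkK : k < K := Nat.lt_of_succ_le hk
      have h1 := SS_succ_le (A i) (2*q) (by linarith only [hq0]) (by linarith only [hq14, hq0])
        (fun g hg => hgood i k hkK g hg)
      have h2 := ih (le_of_lt hkK) i
      calc SS (A i) (k+1) ≤ (2 - 2*q) * ((n - k*t).descFactorial t : ℝ) * SS (A i) k := h1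
        _ ≤ (2 - 2*q) * ((n - k*t).descFactorial t : ℝ) * ((2 - 2*q)^k * CC n t k) := by
            apply mul_le_mul_of_nonneg_left h2
            have h : (0:ℝ) ≤ 2 - 2*q := by linarith only [hq14]
            positivity
        _ = (2 - 2*q)^(k+1) * CC n t (k+1) := by rw [CC_succ]; ring
  have hCCpos : ∀ k : ℕ, k ≤ K → (0:ℝ) < CC n t k := by
    intro k
    induction k with
    | zero => intro _; rw [CC_zero]; norm_num
    | succ k ih =>
      intro hk
      have hkK : k < K := Nat.lt_of_succ_le hk
      rw [CC_succ]
      exact mul_pos (hE_pos k hkK) (ih (le_of_lt hkK))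
  set L₀ := ⌈α^2 * (t:ℝ)^2 * n / 4⌉₊ with hL₀def
  have hL₀_ge : α^2 * (t:ℝ)^2 * n / 4 ≤ (L₀:ℝ) := Nat.le_ceil _
  have hL₀_le : (L₀:ℝ) ≤ α^2 * (t:ℝ)^2 * n / 4 + 1 :=
    le_of_lt (Nat.ceil_lt_add_one (by positivity))
  clear_value L₀
  have hlog2 : Real.log 2 ≤ 1 := by
    have h := Real.log_le_sub_one_of_pos (by norm_num : (0:ℝ) < 2)
    linarith only [h]
  have hlog2' : (0:ℝ) < Real.log 2 := Real.log_pos (by norm_num)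
  have hexp_key : (s:ℝ) * Real.log n + (L₀:ℝ) * Real.log 2 ≤ q * K := by
    have h1 := hn₁ n hnn₁
    have hD : (0:ℝ) ≤ α^2 * (t:ℝ)^2 * n := by positivity
    have h3 : (L₀:ℝ) * Real.log 2 ≤ (α^2*(t:ℝ)^2*n/4 + 1) * Real.log 2 :=
      mul_le_mul_of_nonneg_right hL₀_le hlog2'.le
    have h4 : (α^2*(t:ℝ)^2*n/4 + 1) * Real.log 2
        ≤ α^2*(t:ℝ)^2*n/4 + Real.log 2 := by
      have h : (0:ℝ) ≤ (α^2*(t:ℝ)^2*n/4) * (1 - Real.log 2) :=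
        mul_nonneg (by positivity) (by linarith only [hlog2])
      linarith only [h]
    have h5 : q * (α * n) - q < q * K := by
      have h := mul_lt_mul_of_pos_left hK_gt hq0
      linarith only [h]
    have h6 : q * (α * n) = α^2*(t:ℝ)^2*n := by rw [hqdef]; ring
    linarith only [h1, h3, h4, h5, h6, hD, hq0]
  have h1q : (0:ℝ) < 1 - q := by linarith only [hq14, hq0]
  have hnumeric : (m:ℝ) * (2 - 2*q)^K * 2^L₀ < 2^(K+1) := by
    have hm' : (m:ℝ) ≤ (n:ℝ)^s := by exact_mod_cast hm
    have h1 : (1 - q)^K ≤ Real.exp (-(q*K)) := by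
      have h2 : 1 - q ≤ Real.exp (-q) := by
        have h := Real.add_one_le_exp (-q); linarith only [h]
      calc (1-q)^K ≤ (Real.exp (-q))^K := pow_le_pow_left₀ h1q.le h2 K
        _ = Real.exp (-(q*(K:ℝ))) := by
            rw [← Real.exp_nat_mul]; ring_nf
    have h2 : (n:ℝ)^s = Real.exp (s * Real.log n) := by
      rw [← Real.log_pow, Real.exp_log (by positivity)]
    have h3 : (2:ℝ)^L₀ = Real.exp (L₀ * Real.log 2) := by
      rw [← Real.log_pow, Real.exp_log (by positivity)]
    have key : (n:ℝ)^s * (1-q)^K * 2^L₀ ≤ 1 := by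
      calc (n:ℝ)^s * (1-q)^K * 2^L₀
          ≤ Real.exp (s*Real.log n) * Real.exp (-(q*K)) * Real.exp (L₀ * Real.log 2) := by
            rw [h2, h3]
            apply mul_le_mul_of_nonneg_right _ (by positivity)
            exact mul_le_mul_of_nonneg_left h1 (by positivity)
        _ = Real.exp ((s*Real.log n + L₀ * Real.log 2) - q*K) := by
            rw [← Real.exp_add, ← Real.exp_add]; ring_nf
        _ ≤ Real.exp 0 := Real.exp_le_exp.2 (by linarith only [hexp_key])
        _ = 1 := Real.exp_zero
    have h4 : (2 - 2*q)^K = 2^K * (1-q)^K := by rw [← mul_pow]; ring_nf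
    have hps : (0:ℝ) ≤ (1-q)^K * 2^L₀ := by positivity
    calc (m:ℝ) * (2-2*q)^K * 2^L₀ = (m * ((1-q)^K * 2^L₀)) * 2^K := by rw [h4]; ring
      _ ≤ ((n:ℝ)^s * ((1-q)^K * 2^L₀)) * 2^K := by
          apply mul_le_mul_of_nonneg_right _ (by positivity)
          exact mul_le_mul_of_nonneg_right hm' hps
      _ = ((n:ℝ)^s * (1-q)^K * 2^L₀) * 2^K := by ring
      _ ≤ 1 * 2^K := mul_le_mul_of_nonneg_right key (by positivity)
      _ < 2^(K+1) := by
          rw [one_mul, pow_succ]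
          linarith only [pow_pos (by norm_num : (0:ℝ)<2) K]
  -- pigeonhole
  have hdist : ∀ g : Fin K → (Fin t → Fin n),
      (if Valid n t g then (∑ i : Fin m, W (A i) g) else 0)
      = ∑ i : Fin m, (if Valid n t g then W (A i) g else 0) := by
    intro g; by_cases h : Valid n t g <;> simp [h]
  have hswap : ∑ g : Fin K → (Fin t → Fin n),
      (if Valid n t g then (∑ i : Fin m, W (A i) g) else 0)
      = ∑ i : Fin m, SS (A i) K := by
    rw [Finset.sum_congr rfl (fun g _ => hdist g), Finset.sum_comm]
    rfl
  have htot : ∑ g : Fin K → (Fin t → Fin n),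
      (if Valid n t g then (∑ i : Fin m, W (A i) g) else 0)
      < ∑ g : Fin K → (Fin t → Fin n),
      (if Valid n t g then ((2:ℝ)^(K+1) / 2^L₀) else 0) := by
    rw [hswap]
    have hrhs : ∑ g : Fin K → (Fin t → Fin n),
        (if Valid n t g then ((2:ℝ)^(K+1) / 2^L₀) else 0)
        = ((2:ℝ)^(K+1) / 2^L₀) * CC n t K := by
      rw [CC, Finset.mul_sum]
      apply Finset.sum_congr rfl
      intro g _
      by_cases h : Valid n t g <;> simp [h]
    rw [hrhs]
    have hCC := hCCpos K le_rfl
    have h5 : (m:ℝ) * (2-2*q)^K < 2^(K+1)/2^L₀ := by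
      rw [lt_div_iff₀ (by positivity)]
      exact hnumeric
    calc ∑ i : Fin m, SS (A i) K ≤ ∑ i : Fin m, (2 - 2*q)^K * CC n t K :=
          Finset.sum_le_sum (fun i _ => hSSle K le_rfl i)
      _ = (m:ℝ) * ((2-2*q)^K * CC n t K) := by
          rw [Finset.sum_const, card_univ, Fintype.card_fin]; simp
      _ = ((m:ℝ) * (2-2*q)^K) * CC n t K := by ring
      _ < (2^(K+1)/2^L₀) * CC n t K := mul_lt_mul_of_pos_right h5 hCC
  obtain ⟨g, -, hgl⟩ := Finset.exists_lt_of_sum_lt htot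
  have hv : Valid n t g := by
    by_contra h
    rw [if_neg h, if_neg h] at hgl
    exact lt_irrefl _ hgl
  rw [if_pos hv, if_pos hv] at hgl
  have hfail : ∀ i : Fin m, (univ.filter (fun j => ¬ (g j ∈ A i))).card + L₀ ≤ K := by
    intro i
    have h1 : W (A i) g ≤ ∑ i' : Fin m, W (A i') g :=
      Finset.single_le_sum (fun i' _ => W_nonneg _ _) (mem_univ i)
    have h2 : W (A i) g = 2 ^ (univ.filter (fun j => ¬ (g j ∈ A i))).card := by
      rw [W, Finset.prod_ite, Finset.prod_const_one, Finset.prod_const, one_mul]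
    have h3 : (2:ℝ) ^ ((univ.filter (fun j => ¬ (g j ∈ A i))).card + L₀) < 2^(K+1) := by
      rw [pow_add]
      have h4 : (2:ℝ) ^ (univ.filter (fun j => ¬ (g j ∈ A i))).card < 2^(K+1)/2^L₀ := by
        rw [← h2]; exact lt_of_le_of_lt h1 hgl
      rw [lt_div_iff₀ (by positivity)] at h4
      exact h4
    have h5 := (pow_lt_pow_iff_right₀ (by norm_num : (1:ℝ) < 2)).1 h3
    omega
  set F : Finset (Fin t → Fin n) := (univ.image g) ∩ (univ.biUnion A) with hF
  have ginj : Function.Injective g := by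
    intro j1 j2 h
    by_contra hne
    exact hv.2 j1 j2 hne ⟨0, ht⟩ ⟨0, ht⟩ (by rw [h])
  refine ⟨F, inter_subset_right, ?_, ?_, ?_⟩
  · calc (F.card : ℝ) ≤ ((univ.image g).card : ℝ) := by
          exact_mod_cast card_le_card inter_subset_left
      _ = (K : ℝ) := by rw [card_image_of_injective _ ginj, card_univ, Fintype.card_fin]
      _ ≤ α * n := hK_le
  · intro f1 hf1 f2 hf2 hne p p'
    obtain ⟨j1, -, rfl⟩ := mem_image.1 (mem_of_mem_inter_left hf1)
    obtain ⟨j2, -, rfl⟩ := mem_image.1 (mem_of_mem_inter_left hf2)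
    have hj : j1 ≠ j2 := fun h => hne (by rw [h])
    exact hv.2 j1 j2 hj p p'
  · intro i
    have hsub : (univ.filter (fun j => g j ∈ A i)).image g ⊆ F ∩ A i := by
      intro x hx
      obtain ⟨j, hj, rfl⟩ := mem_image.1 hx
      have hji : g j ∈ A i := (mem_filter.1 hj).2
      refine mem_inter.2 ⟨mem_inter.2 ⟨mem_image_of_mem g (mem_univ j), ?_⟩, hji⟩
      exact mem_biUnion.2 ⟨i, mem_univ i, hji⟩
    have hcard1 : ((univ.filter (fun j => g j ∈ A i)).image g).card
        = (univ.filter (fun j => g j ∈ A i)).card := card_image_of_injective _ ginj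
    have hcount : (univ.filter (fun j => g j ∈ A i)).card
        + (univ.filter (fun j => ¬(g j ∈ A i))).card = K := by
      rw [card_filter_add_card_filter_not, card_univ, Fintype.card_fin]
    have hL := hfail i
    have hsucc : L₀ ≤ (univ.filter (fun j => g j ∈ A i)).card := by omega
    calc α^2 * (t:ℝ)^2 * n / 4 ≤ (L₀ : ℝ) := hL₀_ge
      _ ≤ ((univ.filter (fun j => g j ∈ A i)).card : ℝ) := by exact_mod_cast hsucc
      _ = (((univ.filter (fun j => g j ∈ A i)).image g).card : ℝ) := by rw [hcard1]
      _ ≤ ((F ∩ A i).card : ℝ) := by exact_mod_cast card_le_card hsub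
end

section
/- For every integer k ≥ 3 and sufficiently small γ > 0 the following holds for all sufficiently large n. Let (H,φ) be a colored k-graph on an n-element vertex set V with δ_{k-1}(H) ≥ (1/2 + γ)n and Δ_{k-1}(H_i) ≤ cn for every color i, where c ≤ 4(γ/2)^k·(3k)^{−2}. Then for every vertex v ∈ V there are at least 4(γ/2)^k·n^{4k−4} properly colored v-absorbers in (H,φ). -/
open Finset

/-- The degree of a vertex set `S` in a hypergraph `H`:
the number of edges of `H` containing `S`. -/
def hypDeg {V : Type} [DecidableEq V] (H : Finset (Finset V)) (S : Finset V) : ℕ :=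
  (H.filter fun e => S ⊆ e).card

/-- The list of edges of the `(k,ℓ)`-path whose vertices are the list `l` (in order):
the `j`-th edge consists of the `k` consecutive vertices starting at position `j * (k - ℓ)`.
(For `ℓ = k - 1` this gives the edges of a tight path.) -/
def klEdges {V : Type} [DecidableEq V] (k ℓ : ℕ) (l : List V) : List (Finset V) :=
  (List.range ((l.length - ℓ) / (k - ℓ))).map fun j => ((l.drop (j * (k - ℓ))).take k).toFinset

/-- `l` is the vertex list of a properly colored `(k,ℓ)`-path in the colored
hypergraph `(H, φ)`: the vertices are distinct, the length is `k + (t-1)(k-ℓ)` for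
some number `t ≥ 1` of edges, all edges belong to `H`, and any two distinct
intersecting edges receive distinct colors.
(Taking `ℓ = k - 1` gives properly colored tight paths.) -/
def IsPcPath {V : Type} [DecidableEq V] (H : Finset (Finset V)) (φ : Finset V → ℕ)
    (k ℓ : ℕ) (l : List V) : Prop :=
  l.Nodup ∧ k ≤ l.length ∧ (k - ℓ) ∣ (l.length - k) ∧
    (∀ e ∈ klEdges k ℓ l, e ∈ H) ∧
    (∀ e ∈ klEdges k ℓ l, ∀ f ∈ klEdges k ℓ l, e ≠ f → (e ∩ f).Nonempty → φ e ≠ φ f)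

/-- A properly colored `v`-absorber: a `(4k-4)`-tuple `w` of vertices such that both
`w₁ … w_{4k-4}` and `w₁ … w_{2k-2} v w_{2k-1} … w_{4k-4}` span properly colored tight
paths in `(H, φ)`. -/
def IsPcAbsorber (n k : ℕ) (H : Finset (Finset (Fin n))) (φ : Finset (Fin n) → ℕ)
    (v : Fin n) (w : Fin (4 * k - 4) → Fin n) : Prop :=
  IsPcPath H φ k (k - 1) (List.ofFn w) ∧
  IsPcPath H φ k (k - 1)
    ((List.ofFn w).take (2 * k - 2) ++ v :: (List.ofFn w).drop (2 * k - 2))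

set_option linter.unusedSectionVars false
set_option linter.unusedVariables false
set_option maxHeartbeats 1000000

namespace Stmt10

variable {V : Type} [DecidableEq V]

/-- The `j`-th window of length `k` in the list `l`. -/
def Ew (k : ℕ) (l : List V) (j : ℕ) : Finset V := ((l.drop j).take k).toFinset

lemma mem_Ew {k : ℕ} {l : List V} {j : ℕ} {a : V} :
    a ∈ Ew k l j ↔ ∃ p, j ≤ p ∧ p < j + k ∧ ∃ hp : p < l.length, l[p] = a := by
  simp only [Ew, List.mem_toFinset, List.mem_iff_getElem]
  constructor
  · rintro ⟨m, hm, rfl⟩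
    have hm' : m < k ∧ m < l.length - j := by
      simpa [List.length_take, List.length_drop, Nat.lt_min] using hm
    refine ⟨j + m, by omega, by omega, by omega, ?_⟩
    rw [List.getElem_take, List.getElem_drop]
  · rintro ⟨p, h1, h2, hp, rfl⟩
    refine ⟨p - j, ?_, ?_⟩
    · simp only [List.length_take, List.length_drop, Nat.lt_min]; omega
    · rw [List.getElem_take, List.getElem_drop]; congr 1; omega

lemma Ew_disjoint {k : ℕ} {l : List V} (hl : l.Nodup) {i j : ℕ} (h : i + k ≤ j) :
    Disjoint (Ew k l i) (Ew k l j) := by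
  rw [Finset.disjoint_left]
  rintro a hai haj
  rw [mem_Ew] at hai haj
  obtain ⟨p, hp1, hp2, hp, rfl⟩ := hai
  obtain ⟨q, hq1, hq2, hq, he⟩ := haj
  have := (hl.getElem_inj_iff (hi := hq) (hj := hp)).mp he
  omega

lemma Ew_cons_zero {k : ℕ} (hk : 1 ≤ k) (x : V) (l : List V) :
    Ew k (x :: l) 0 = insert x ((l.take (k-1)).toFinset) := by
  obtain ⟨m, rfl⟩ : ∃ m, k = m + 1 := ⟨k - 1, by omega⟩
  simp [Ew, List.take_succ_cons]

lemma Ew_cons_succ {k : ℕ} (x : V) (l : List V) (j : ℕ) :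
    Ew k (x :: l) (j+1) = Ew k l j := by
  simp [Ew, List.drop_succ_cons]

lemma Ew_append_of_lt {k : ℕ} {l l' : List V} {j : ℕ} (h : j + k ≤ l.length) :
    Ew k (l ++ l') j = Ew k l j := by
  unfold Ew
  rw [List.drop_append_of_le_length (by omega),
    List.take_append_of_le_length (by simp [List.length_drop]; omega)]

lemma Ew_append_last {k : ℕ} (hk : 1 ≤ k) {l : List V} (x : V) (hlen : k ≤ l.length + 1) :
    Ew k (l ++ [x]) (l.length + 1 - k) = insert x ((l.drop (l.length + 1 - k)).toFinset) := by
  unfold Ew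
  rw [List.drop_append_of_le_length (by omega),
    List.take_of_length_le (by simp [List.length_append, List.length_drop]; omega)]
  ext a
  simp [List.mem_toFinset, or_comm]

/-- All windows of `l` are edges of `H`. -/
def EdgesOK (H : Finset (Finset V)) (k : ℕ) (l : List V) : Prop :=
  ∀ j < l.length - (k-1), Ew k l j ∈ H

/-- Nearby windows get distinct colors. -/
def ColorsOK (φ : Finset V → ℕ) (k : ℕ) (l : List V) : Prop :=
  ∀ i j, i < j → j < l.length - (k-1) → j ≤ i + (k-1) → φ (Ew k l i) ≠ φ (Ew k l j)

variable {H : Finset (Finset V)} {φ : Finset V → ℕ} {k : ℕ} {l : List V} {x : V}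

lemma EdgesOK_cons (hk : 1 ≤ k) (h : EdgesOK H k l)
    (hnew : k ≤ l.length + 1 → insert x ((l.take (k-1)).toFinset) ∈ H) :
    EdgesOK H k (x :: l) := by
  intro j hj
  simp only [List.length_cons] at hj
  match j with
  | 0 => rw [Ew_cons_zero hk]; exact hnew (by omega)
  | (j+1) => rw [Ew_cons_succ]; exact h j (by omega)

lemma ColorsOK_cons (hk : 1 ≤ k) (h : ColorsOK φ k l)
    (hnew : ∀ j < l.length - (k-1), j ≤ k - 2 →
      φ (insert x ((l.take (k-1)).toFinset)) ≠ φ (Ew k l j)) :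
    ColorsOK φ k (x :: l) := by
  intro i j hij hj hjk
  simp only [List.length_cons] at hj
  match i, j with
  | 0, (j+1) => rw [Ew_cons_zero hk, Ew_cons_succ]; exact hnew j (by omega) (by omega)
  | (i+1), (j+1) =>
    rw [Ew_cons_succ, Ew_cons_succ]; exact h i j (by omega) (by omega) (by omega)

lemma EdgesOK_append (hk : 1 ≤ k) (h : EdgesOK H k l)
    (hnew : k ≤ l.length + 1 → insert x ((l.drop (l.length + 1 - k)).toFinset) ∈ H) :
    EdgesOK H k (l ++ [x]) := by
  intro j hj
  simp only [List.length_append, List.length_singleton] at hj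
  rcases lt_or_ge j (l.length - (k-1)) with h1 | h1
  · rw [Ew_append_of_lt (by omega)]; exact h j h1
  · have hje : j = l.length + 1 - k := by omega
    rw [hje, Ew_append_last hk x (by omega)]; exact hnew (by omega)

lemma ColorsOK_append (hk : 1 ≤ k) (h : ColorsOK φ k l)
    (hnew : ∀ j < l.length - (k-1), l.length - (k-1) ≤ j + (k-1) →
      φ (Ew k l j) ≠ φ (insert x ((l.drop (l.length + 1 - k)).toFinset))) :
    ColorsOK φ k (l ++ [x]) := by
  intro i j hij hj hjk
  simp only [List.length_append, List.length_singleton] at hj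
  rcases lt_or_ge j (l.length - (k-1)) with h1 | h1
  · rw [Ew_append_of_lt (by omega), Ew_append_of_lt (by omega)]
    exact h i j hij h1 hjk
  · have hje : j = l.length + 1 - k := by omega
    rw [Ew_append_of_lt (by omega), hje, Ew_append_last hk x (by omega)]
    exact hnew i (by omega) (by omega)

lemma klEdges_eq (hk : 1 ≤ k) (l : List V) :
    klEdges k (k-1) l = (List.range (l.length - (k-1))).map (Ew k l) := by
  unfold klEdges Ew
  have h1 : k - (k-1) = 1 := by omega
  simp [h1]

lemma isPcPath (hk : 1 ≤ k) (hl : l.Nodup) (hlen : k ≤ l.length)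
    (hE : EdgesOK H k l) (hC : ColorsOK φ k l) : IsPcPath H φ k (k-1) l := by
  refine ⟨hl, hlen, by rw [show k - (k-1) = 1 by omega]; exact one_dvd _, ?_, ?_⟩
  · intro e he
    rw [klEdges_eq hk] at he
    simp only [List.mem_map, List.mem_range] at he
    obtain ⟨j, hj, rfl⟩ := he
    exact hE j hj
  · intro e he f hf hef hint
    rw [klEdges_eq hk] at he hf
    simp only [List.mem_map, List.mem_range] at he hf
    obtain ⟨i, hi, rfl⟩ := he
    obtain ⟨j, hj, rfl⟩ := hf
    rcases Nat.lt_trichotomy i j with h | h | h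
    · by_cases hd : j ≤ i + (k-1)
      · exact hC i j h hj hd
      · exact absurd hint (by
          rw [Finset.not_nonempty_iff_eq_empty, ← Finset.disjoint_iff_inter_eq_empty]
          exact Ew_disjoint hl (by omega))
    · exact absurd (by rw [h]) hef
    · by_cases hd : i ≤ j + (k-1)
      · exact (hC j i h hi hd).symm
      · exact absurd hint (by
          rw [Finset.not_nonempty_iff_eq_empty, ← Finset.disjoint_iff_inter_eq_empty]
          exact (Ew_disjoint hl (by omega)).symm)


section P2

/-- generic greedy tree-counting lemma -/
lemma tree_count {α : Type} [Fintype α] [DecidableEq α] (P : List α → Prop) [DecidablePred P]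
    (m : ℕ) (b : ℕ → ℝ) (hb : ∀ i, 0 ≤ b i) (h0 : P [])
    (hstep : ∀ r, P r → r.length < m →
      b r.length ≤ ((univ.filter fun x => P (x :: r)).card : ℝ)) :
    ∃ s : Finset (List α), (∀ r ∈ s, P r ∧ r.length = m) ∧
      (∏ i ∈ Finset.range m, b i) ≤ (s.card : ℝ) := by
  induction m with
  | zero => exact ⟨{[]}, by simp [h0], by simp⟩
  | succ m ih =>
    obtain ⟨s, hs, hcard⟩ := ih (fun r hr hl => hstep r hr (by omega))
    refine ⟨s.biUnion (fun r => (univ.filter fun x => P (x :: r)).image (fun x => x :: r)),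
      ?_, ?_⟩
    · intro r hr
      simp only [Finset.mem_biUnion, Finset.mem_image, Finset.mem_filter] at hr
      obtain ⟨t, ht, x, ⟨_, hx⟩, rfl⟩ := hr
      exact ⟨hx, by simp [(hs t ht).2]⟩
    · rw [Finset.card_biUnion (by
        intro r₁ h₁ r₂ h₂ hne
        simp only [Finset.disjoint_left, Finset.mem_image, Finset.mem_filter]
        rintro a ⟨x, -, rfl⟩ ⟨y, -, heq⟩
        exact hne (by injection heq with _ h; rw [h]))]
      rw [Finset.prod_range_succ]
      have h1 : (∏ i ∈ Finset.range m, b i) * b m ≤ (s.card : ℝ) * b m :=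
        mul_le_mul_of_nonneg_right hcard (hb m)
      refine h1.trans ?_
      have h2 : (s.card : ℝ) * b m ≤ ∑ r ∈ s, ((univ.filter fun x => P (x :: r)).card : ℝ) := by
        have := Finset.sum_le_sum (fun r hr => by
          have h := hstep r (hs r hr).1 (by rw [(hs r hr).2]; omega)
          rwa [(hs r hr).2] at h)
        simpa [Finset.sum_const, nsmul_eq_mul] using this
      refine h2.trans ?_
      rw [Nat.cast_sum]
      apply le_of_eq
      congr 1
      funext r
      rw [Finset.card_image_of_injective _ (fun a b hab => by injection hab)]

/-- the `T_v` segment determined by the reversed choice list `r` -/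
def useg (k : ℕ) (v : V) (r : List V) : List V :=
  r.drop (r.length - (2*k-2)) ++ v :: (r.take (r.length - (2*k-2))).reverse

/-- the `T` segment -/
def wseg (k : ℕ) (r : List V) : List V :=
  r.drop (r.length - (2*k-2)) ++ (r.take (r.length - (2*k-2))).reverse

lemma length_useg (k : ℕ) (v : V) (r : List V) : (useg k v r).length = r.length + 1 := by
  simp [useg]; omega

lemma length_wseg (k : ℕ) (r : List V) : (wseg k r).length = r.length := by
  simp [wseg]

lemma useg_low {k : ℕ} {v : V} {r : List V} (h : r.length ≤ 2*k-2) :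
    useg k v r = r ++ [v] := by
  have h1 : r.length - (2*k-2) = 0 := by omega
  simp [useg, h1]

lemma wseg_low {k : ℕ} {r : List V} (h : r.length ≤ 2*k-2) : wseg k r = r := by
  have h1 : r.length - (2*k-2) = 0 := by omega
  simp [wseg, h1]

lemma useg_cons_low {k : ℕ} {v x : V} {r : List V} (h : r.length + 1 ≤ 2*k-2) :
    useg k v (x :: r) = x :: useg k v r := by
  rw [useg_low (by simp only [List.length_cons]; omega), useg_low (by omega)]
  simp

lemma wseg_cons_low {k : ℕ} {x : V} {r : List V} (h : r.length + 1 ≤ 2*k-2) :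
    wseg k (x :: r) = x :: wseg k r := by
  rw [wseg_low (by simp only [List.length_cons]; omega), wseg_low (by omega)]

lemma useg_cons_high {k : ℕ} {v x : V} {r : List V} (h : 2*k-2 ≤ r.length) :
    useg k v (x :: r) = useg k v r ++ [x] := by
  have h1 : (x :: r).length - (2*k-2) = (r.length - (2*k-2)) + 1 := by simp; omega
  simp only [useg, h1, List.drop_succ_cons, List.take_succ_cons, List.reverse_cons]
  simp

lemma wseg_cons_high {k : ℕ} {x : V} {r : List V} (h : 2*k-2 ≤ r.length) :
    wseg k (x :: r) = wseg k r ++ [x] := by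
  have h1 : (x :: r).length - (2*k-2) = (r.length - (2*k-2)) + 1 := by simp; omega
  simp only [wseg, h1, List.drop_succ_cons, List.take_succ_cons, List.reverse_cons]
  simp

lemma mem_useg {k : ℕ} {v a : V} {r : List V} : a ∈ useg k v r ↔ a = v ∨ a ∈ r := by
  simp only [useg, List.mem_append, List.mem_cons, List.mem_reverse]
  constructor
  · rintro (h | h | h)
    · exact Or.inr (List.mem_of_mem_drop h)
    · exact Or.inl h
    · exact Or.inr (List.mem_of_mem_take h)
  · rintro (h | h)
    · exact Or.inr (Or.inl h)
    · rcases (List.mem_append.mp (by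
        rw [List.take_append_drop (r.length - (2*k-2)) r]; exact h :
          a ∈ r.take (r.length - (2*k-2)) ++ r.drop (r.length - (2*k-2)))) with h' | h'
      · exact Or.inr (Or.inr h')
      · exact Or.inl h'

lemma nodup_wseg {k : ℕ} {v : V} {r : List V} (h : (useg k v r).Nodup) :
    (wseg k r).Nodup := by
  exact List.Nodup.sublist ((List.sublist_cons_self v _).append_left _) h

end P2

section P3
variable [Fintype V]
variable {H : Finset (Finset V)} {φ : Finset V → ℕ} {k : ℕ}

lemma deg_le_card (hcard : ∀ e ∈ H, e.card = k) (hk : 1 ≤ k)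
    {S : Finset V} (hS : S.card = k-1) :
    hypDeg H S ≤ (univ.filter fun x => x ∉ S ∧ insert x S ∈ H).card := by
  classical
  apply Finset.card_le_card_of_surjOn (fun x => insert x S)
  intro e he
  simp only [Finset.coe_filter, Set.mem_setOf_eq, Finset.mem_filter] at he
  obtain ⟨heH, hSe⟩ := he
  have h1 : (e \ S).card = 1 := by
    rw [Finset.card_sdiff_of_subset hSe, hcard e heH, hS]; omega
  obtain ⟨x, hx⟩ := Finset.card_eq_one.mp h1
  have hxe : x ∈ e \ S := hx ▸ Finset.mem_singleton_self x
  have hins : insert x S = e := by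
    have h2 := Finset.union_sdiff_of_subset hSe
    rw [hx] at h2
    rw [← h2, Finset.insert_eq, Finset.union_comm]
  refine ⟨x, ?_, hins⟩
  simp only [Finset.coe_filter, Set.mem_setOf_eq, Finset.mem_univ, true_and]
  exact ⟨(Finset.mem_sdiff.mp hxe).2, hins ▸ heH⟩

lemma bad_card (S : Finset V) (i : ℕ) :
    (univ.filter fun x => x ∉ S ∧ insert x S ∈ H ∧ φ (insert x S) = i).card
      ≤ hypDeg (H.filter fun e => φ e = i) S := by
  classical
  apply Finset.card_le_card_of_injOn (fun x => insert x S)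
  · intro x hx
    simp only [Finset.coe_filter, Finset.mem_coe, Set.mem_setOf_eq, Finset.mem_filter, Finset.mem_univ, true_and] at hx ⊢
    exact ⟨⟨hx.2.1, hx.2.2⟩, Finset.subset_insert x S⟩
  · intro x hx y hy h
    simp only [Finset.coe_filter, Set.mem_setOf_eq, Finset.mem_univ, true_and] at hx hy
    have h'' : insert x S = insert y S := h
    have : x ∈ insert y S := h'' ▸ Finset.mem_insert_self x S
    rcases Finset.mem_insert.mp this with h' | h'
    · exact h'
    · exact absurd h' hx.1

variable {γ c : ℝ} {n : ℕ}

lemma count_single (hcard : ∀ e ∈ H, e.card = k) (hk : 1 ≤ k)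
    (hn : Fintype.card V = n)
    (hdeg : ∀ S : Finset V, S.card = k-1 → ((1:ℝ)/2 + γ) * n ≤ (hypDeg H S : ℝ))
    (hcol : ∀ i : ℕ, ∀ S : Finset V, S.card = k-1 →
      ((hypDeg (H.filter fun e => φ e = i) S : ℕ) : ℝ) ≤ c * n)
    (hc0 : 0 ≤ c * n)
    (S : Finset V) (hS : S.card = k-1) (L₁ L₂ : List ℕ) (used : Finset V)
    (T : Finset V)
    (hT : ∀ x, x ∉ used → x ∉ S → insert x S ∈ H →
        (∀ i ∈ L₁, φ (insert x S) ≠ i) → (∀ i ∈ L₂, φ (insert x S) ≠ i) → x ∈ T) :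
    ((1:ℝ)/2 + γ) * n - ((L₁.length : ℝ) + (L₂.length : ℝ)) * (c*n) - (used.card : ℝ)
      ≤ (T.card : ℝ) := by
  classical
  set A := univ.filter fun x => x ∉ S ∧ insert x S ∈ H with hA
  set B := used ∪ (L₁ ++ L₂).toFinset.biUnion
      (fun i => univ.filter fun x => x ∉ S ∧ insert x S ∈ H ∧ φ (insert x S) = i) with hB
  have hsub : A \ B ⊆ T := by
    intro x hx
    rw [Finset.mem_sdiff] at hx
    obtain ⟨hxA, hxB⟩ := hx
    simp only [hA, Finset.mem_filter, Finset.mem_univ, true_and] at hxA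
    simp only [hB, Finset.mem_union, Finset.mem_biUnion, List.mem_toFinset,
      Finset.mem_filter, Finset.mem_univ, true_and, not_or, not_exists] at hxB
    refine hT x hxB.1 hxA.1 hxA.2 ?_ ?_
    · intro i hi he
      exact hxB.2 i ⟨List.mem_append_left _ hi, hxA.1, hxA.2, he⟩
    · intro i hi he
      exact hxB.2 i ⟨List.mem_append_right _ hi, hxA.1, hxA.2, he⟩
  have hAcard : ((1:ℝ)/2 + γ) * n ≤ (A.card : ℝ) :=
    (hdeg S hS).trans (by exact_mod_cast deg_le_card hcard hk hS)
  have hBcard : (B.card : ℝ) ≤ (used.card : ℝ) + ((L₁.length : ℝ) + (L₂.length : ℝ)) * (c*n) := by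
    have h1 : B.card ≤ used.card + ∑ i ∈ (L₁ ++ L₂).toFinset,
        (univ.filter fun x => x ∉ S ∧ insert x S ∈ H ∧ φ (insert x S) = i).card :=
      (Finset.card_union_le _ _).trans (by gcongr; exact Finset.card_biUnion_le)
    have h2 : ((∑ i ∈ (L₁ ++ L₂).toFinset,
        (univ.filter fun x => x ∉ S ∧ insert x S ∈ H ∧ φ (insert x S) = i).card : ℕ) : ℝ)
        ≤ ((L₁.length : ℝ) + (L₂.length : ℝ)) * (c*n) := by
      rw [Nat.cast_sum]
      calc ∑ i ∈ (L₁ ++ L₂).toFinset,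
            (((univ.filter fun x => x ∉ S ∧ insert x S ∈ H ∧ φ (insert x S) = i).card : ℕ) : ℝ)
          ≤ ∑ _i ∈ (L₁ ++ L₂).toFinset, (c*n) := by
            apply Finset.sum_le_sum
            intro i _
            exact (Nat.cast_le.mpr (bad_card S i)).trans (hcol i S hS)
        _ = ((L₁ ++ L₂).toFinset.card : ℝ) * (c*n) := by rw [Finset.sum_const, nsmul_eq_mul]
        _ ≤ ((L₁.length : ℝ) + (L₂.length : ℝ)) * (c*n) := by
            apply mul_le_mul_of_nonneg_right _ hc0
            have := List.toFinset_card_le (l := L₁ ++ L₂)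
            rw [List.length_append] at this
            push_cast
            exact_mod_cast this
    calc (B.card : ℝ) ≤ ((used.card + ∑ i ∈ (L₁ ++ L₂).toFinset,
          (univ.filter fun x => x ∉ S ∧ insert x S ∈ H ∧ φ (insert x S) = i).card : ℕ) : ℝ) := by
          exact_mod_cast h1
      _ ≤ (used.card : ℝ) + ((L₁.length : ℝ) + (L₂.length : ℝ)) * (c*n) := by
          push_cast at h2 ⊢
          linarith
  have hAB : (A.card : ℝ) ≤ ((A \ B).card : ℝ) + (B.card : ℝ) := by
    have : A ⊆ (A \ B) ∪ B := by
      intro x hx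
      by_cases h : x ∈ B
      · exact Finset.mem_union_right _ h
      · exact Finset.mem_union_left _ (Finset.mem_sdiff.mpr ⟨hx, h⟩)
    have := (Finset.card_le_card this).trans (Finset.card_union_le _ _)
    exact_mod_cast this
  have := Finset.card_le_card hsub
  have hTc : (((A \ B).card : ℕ) : ℝ) ≤ (T.card : ℝ) := by exact_mod_cast this
  linarith

lemma count_double (hcard : ∀ e ∈ H, e.card = k) (hk : 1 ≤ k)
    (hn : Fintype.card V = n)
    (hdeg : ∀ S : Finset V, S.card = k-1 → ((1:ℝ)/2 + γ) * n ≤ (hypDeg H S : ℝ))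
    (hcol : ∀ i : ℕ, ∀ S : Finset V, S.card = k-1 →
      ((hypDeg (H.filter fun e => φ e = i) S : ℕ) : ℝ) ≤ c * n)
    (hc0 : 0 ≤ c * n)
    (S₁ S₂ : Finset V) (h₁ : S₁.card = k-1) (h₂ : S₂.card = k-1)
    (L₁ L₂ : List ℕ) (used : Finset V)
    (T : Finset V)
    (hT : ∀ x, x ∉ used → x ∉ S₁ → x ∉ S₂ → insert x S₁ ∈ H → insert x S₂ ∈ H →
        (∀ i ∈ L₁, φ (insert x S₁) ≠ i) → (∀ i ∈ L₂, φ (insert x S₂) ≠ i) → x ∈ T) :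
    (((1:ℝ)/2 + γ) * n + ((1:ℝ)/2 + γ) * n - n)
      - ((L₁.length : ℝ) * (c*n) + (L₂.length : ℝ) * (c*n)) - (used.card : ℝ)
      ≤ (T.card : ℝ) := by
  classical
  set A₁ := univ.filter fun x => x ∉ S₁ ∧ insert x S₁ ∈ H with hA1
  set A₂ := univ.filter fun x => x ∉ S₂ ∧ insert x S₂ ∈ H with hA2
  set bd1 := L₁.toFinset.biUnion
        (fun i => univ.filter fun x => x ∉ S₁ ∧ insert x S₁ ∈ H ∧ φ (insert x S₁) = i) with hbd1
  set bd2 := L₂.toFinset.biUnion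
        (fun i => univ.filter fun x => x ∉ S₂ ∧ insert x S₂ ∈ H ∧ φ (insert x S₂) = i) with hbd2
  set B := used ∪ bd1 ∪ bd2 with hB
  have hsub : (A₁ ∩ A₂) \ B ⊆ T := by
    intro x hx
    rw [Finset.mem_sdiff, Finset.mem_inter] at hx
    obtain ⟨⟨hxA1, hxA2⟩, hxB⟩ := hx
    simp only [hA1, Finset.mem_filter, Finset.mem_univ, true_and] at hxA1
    simp only [hA2, Finset.mem_filter, Finset.mem_univ, true_and] at hxA2
    simp only [hB, hbd1, hbd2, Finset.mem_union, Finset.mem_biUnion, List.mem_toFinset,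
      Finset.mem_filter, Finset.mem_univ, true_and, not_or, not_exists] at hxB
    refine hT x hxB.1.1 hxA1.1 hxA2.1 hxA1.2 hxA2.2 ?_ ?_
    · intro i hi he
      exact hxB.1.2 i ⟨hi, hxA1.1, hxA1.2, he⟩
    · intro i hi he
      exact hxB.2 i ⟨hi, hxA2.1, hxA2.2, he⟩
  have hA1card : ((1:ℝ)/2 + γ) * n ≤ (A₁.card : ℝ) :=
    (hdeg S₁ h₁).trans (by exact_mod_cast deg_le_card hcard hk h₁)
  have hA2card : ((1:ℝ)/2 + γ) * n ≤ (A₂.card : ℝ) :=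
    (hdeg S₂ h₂).trans (by exact_mod_cast deg_le_card hcard hk h₂)
  have hinter : (A₁.card : ℝ) + (A₂.card : ℝ) - n ≤ ((A₁ ∩ A₂).card : ℝ) := by
    have h1 := Finset.card_union_add_card_inter A₁ A₂
    have h2 : (A₁ ∪ A₂).card ≤ n := by
      rw [← hn, ← Finset.card_univ]
      exact Finset.card_le_card (Finset.subset_univ _)
    have h3 : A₁.card + A₂.card ≤ n + (A₁ ∩ A₂).card := by omega
    have h4 : ((A₁.card + A₂.card : ℕ) : ℝ) ≤ ((n + (A₁ ∩ A₂).card : ℕ) : ℝ) := Nat.cast_le.mpr h3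
    push_cast at h4
    linarith
  have hbadsum : ∀ (S : Finset V) (L : List ℕ), S.card = k-1 →
      ((L.toFinset.biUnion (fun i => univ.filter fun x =>
        x ∉ S ∧ insert x S ∈ H ∧ φ (insert x S) = i)).card : ℝ) ≤ (L.length : ℝ) * (c*n) := by
    intro S L hS
    calc ((L.toFinset.biUnion _).card : ℝ)
        ≤ ((∑ i ∈ L.toFinset, (univ.filter fun x =>
            x ∉ S ∧ insert x S ∈ H ∧ φ (insert x S) = i).card : ℕ) : ℝ) := by
          exact_mod_cast Finset.card_biUnion_le
      _ ≤ ∑ _i ∈ L.toFinset, (c*n) := by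
          rw [Nat.cast_sum]
          apply Finset.sum_le_sum
          intro i _
          exact (Nat.cast_le.mpr (bad_card S i)).trans (hcol i S hS)
      _ = (L.toFinset.card : ℝ) * (c*n) := by rw [Finset.sum_const, nsmul_eq_mul]
      _ ≤ (L.length : ℝ) * (c*n) := by
          apply mul_le_mul_of_nonneg_right _ hc0
          exact_mod_cast List.toFinset_card_le L
  have hBcard : (B.card : ℝ) ≤ (used.card : ℝ)
      + ((L₁.length : ℝ) * (c*n) + (L₂.length : ℝ) * (c*n)) := by
    have h1 : B.card ≤ used.card + bd1.card + bd2.card :=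
      (Finset.card_union_le (used ∪ bd1) bd2).trans
        (Nat.add_le_add_right (Finset.card_union_le used bd1) bd2.card)
    have h1' : (B.card : ℝ) ≤ (used.card : ℝ) + (bd1.card : ℝ) + (bd2.card : ℝ) := by
      exact_mod_cast h1
    have hb1 := hbadsum S₁ L₁ h₁
    have hb2 := hbadsum S₂ L₂ h₂
    rw [← hbd1] at hb1
    rw [← hbd2] at hb2
    linarith
  have hAB : ((A₁ ∩ A₂).card : ℝ) ≤ (((A₁ ∩ A₂) \ B).card : ℝ) + (B.card : ℝ) := by
    have hsub2 : (A₁ ∩ A₂) ⊆ ((A₁ ∩ A₂) \ B) ∪ B := by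
      intro x hx
      by_cases h : x ∈ B
      · exact Finset.mem_union_right _ h
      · exact Finset.mem_union_left _ (Finset.mem_sdiff.mpr ⟨hx, h⟩)
    have := (Finset.card_le_card hsub2).trans (Finset.card_union_le _ _)
    exact_mod_cast this
  have hTc : ((((A₁ ∩ A₂) \ B).card : ℕ) : ℝ) ≤ (T.card : ℝ) :=
    by exact_mod_cast Finset.card_le_card hsub
  linarith


end P3

section P5
variable [Fintype V]
variable {H : Finset (Finset V)} {φ : Finset V → ℕ} {k n : ℕ} {γ c : ℝ}

def GoodP (H : Finset (Finset V)) (φ : Finset V → ℕ) (k : ℕ) (v : V) (r : List V) : Prop :=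
  (useg k v r).Nodup ∧ EdgesOK H k (useg k v r) ∧ ColorsOK φ k (useg k v r) ∧
    EdgesOK H k (wseg k r) ∧ ColorsOK φ k (wseg k r)

lemma goodP_nil (hk : 3 ≤ k) (v : V) : GoodP H φ k v ([] : List V) := by
  have h1 : useg k v ([] : List V) = [v] := useg_low (by simp)
  have h2 : wseg k ([] : List V) = [] := wseg_low (by simp)
  refine ⟨?_, ?_, ?_, ?_, ?_⟩
  · rw [h1]; exact List.nodup_singleton v
  · rw [h1]; intro j hj; simp only [List.length_singleton] at hj; omega
  · rw [h1]; intro i j hij hj hjk; simp only [List.length_singleton] at hj; omega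
  · rw [h2]; intro j hj; simp only [List.length_nil] at hj; omega
  · rw [h2]; intro i j hij hj hjk; simp only [List.length_nil] at hj; omega

lemma step_bound (hk : 3 ≤ k) (hcard : ∀ e ∈ H, e.card = k)
    (hn : Fintype.card V = n)
    (hdeg : ∀ S : Finset V, S.card = k-1 → ((1:ℝ)/2 + γ) * n ≤ (hypDeg H S : ℝ))
    (hcol : ∀ i : ℕ, ∀ S : Finset V, S.card = k-1 →
      ((hypDeg (H.filter fun e => φ e = i) S : ℕ) : ℝ) ≤ c * n)
    (hc0 : 0 ≤ c * n)
    (hsingle : 2*(((k-1:ℕ)):ℝ)*(c*(n:ℝ)) + 4*(k:ℝ) ≤ γ*(n:ℝ))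
    (hn8 : 8*k ≤ n)
    (v : V) (r : List V) (hr : GoodP H φ k v r) (hlen : r.length < 4*k-4)
    (T : Finset V) (hT : ∀ x, GoodP H φ k v (x :: r) → x ∈ T) :
    (if 2*k-2 ≤ r.length ∧ r.length ≤ 3*k-4 then γ*(n:ℝ) else (n:ℝ)/2) ≤ (T.card : ℝ) := by
  classical
  obtain ⟨hnd, hEu, hCu, hEw, hCw⟩ := hr
  set ur := useg k v r with hurd
  set wr := wseg k r with hwrd
  have hurlen : ur.length = r.length + 1 := by rw [hurd]; exact length_useg k v r
  have hwrlen : wr.length = r.length := by rw [hwrd]; exact length_wseg k r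
  set used := ur.toFinset with husedd
  have husedcard : used.card = r.length + 1 := by
    rw [husedd, List.toFinset_card_of_nodup hnd, hurlen]
  have husedreal : ((used.card : ℕ) : ℝ) ≤ 4*(k:ℝ) := by
    have h1 : used.card ≤ 4*k := by omega
    calc ((used.card : ℕ) : ℝ) ≤ ((4*k : ℕ) : ℝ) := Nat.cast_le.mpr h1
      _ = 4*(k:ℝ) := by push_cast; ring
  have hn8real : 8*(k:ℝ) ≤ (n:ℝ) := by exact_mod_cast hn8
  have hkreal : (3:ℝ) ≤ (k:ℝ) := by exact_mod_cast hk
  rcases lt_or_ge r.length (2*k-2) with hlt | hge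
  · -- phase L : cons
    rw [if_neg (by omega)]
    have hu : ∀ x : V, useg k v (x :: r) = x :: ur := fun x => useg_cons_low (by omega)
    have hw : ∀ x : V, wseg k (x :: r) = x :: wr := fun x => wseg_cons_low (by omega)
    have hwr : wr = r := wseg_low (by omega)
    have hurv : ur = r ++ [v] := useg_low (by omega)
    rcases lt_or_ge (r.length + 2) k with hfree | hedge
    · -- free step
      have hsub : univ \ used ⊆ T := by
        intro x hx
        have hxu : x ∉ used := (Finset.mem_sdiff.mp hx).2
        have hxur : x ∉ ur := fun hh => hxu (List.mem_toFinset.mpr hh)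
        refine hT x ⟨?_, ?_, ?_, ?_, ?_⟩
        · rw [hu]; exact List.nodup_cons.mpr ⟨hxur, hnd⟩
        · rw [hu]; intro j hj
          simp only [List.length_cons, hurlen] at hj; omega
        · rw [hu]; intro i j hij hj hjk
          simp only [List.length_cons, hurlen] at hj; omega
        · rw [hw]; intro j hj
          simp only [List.length_cons, hwrlen] at hj; omega
        · rw [hw]; intro i j hij hj hjk
          simp only [List.length_cons, hwrlen] at hj; omega
      have hcard1 : (univ \ used).card = n - used.card := by
        rw [Finset.card_sdiff_of_subset (Finset.subset_univ _), Finset.card_univ, hn]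
      have hun : used.card ≤ n := by omega
      have hreal : ((univ \ used).card : ℝ) = (n : ℝ) - used.card := by
        rw [hcard1, Nat.cast_sub hun]
      have := Finset.card_le_card hsub
      have hTcard : ((univ \ used).card : ℝ) ≤ (T.card : ℝ) := Nat.cast_le.mpr this
      rw [hreal] at hTcard
      linarith
    · -- single (phase L) step
      set S := (ur.take (k-1)).toFinset with hS
      have hScard : S.card = k-1 := by
        rw [hS, List.toFinset_card_of_nodup (List.Nodup.sublist (List.take_sublist _ _) hnd),
          List.length_take, hurlen]
        omega
      set L₁ := (List.range (k-1)).map (fun j => φ (Ew k ur j)) with hL₁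
      set L₂ := (List.range (k-1)).map (fun j => φ (Ew k r j)) with hL₂
      have hEwr : EdgesOK H k r := by rw [hwr] at hEw; exact hEw
      have hCwr : ColorsOK φ k r := by rw [hwr] at hCw; exact hCw
      have key := count_single hcard (by omega) hn hdeg hcol hc0 S hScard L₁ L₂ used T
        (by
          intro x hxused hxS hxH hxL₁ hxL₂
          have hxur : x ∉ ur := fun hh => hxused (List.mem_toFinset.mpr hh)
          refine hT x ⟨?_, ?_, ?_, ?_, ?_⟩
          · rw [hu]; exact List.nodup_cons.mpr ⟨hxur, hnd⟩
          · rw [hu]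
            refine EdgesOK_cons (by omega) hEu ?_
            intro _
            rw [← hS]; exact hxH
          · rw [hu]
            refine ColorsOK_cons (by omega) hCu ?_
            intro j hj hjk
            rw [← hS]
            exact hxL₁ (φ (Ew k ur j)) (List.mem_map.mpr ⟨j, List.mem_range.mpr (by omega), rfl⟩)
          · rw [hw, hwr]
            refine EdgesOK_cons (by omega) hEwr ?_
            intro hk'
            have htk : k - 1 ≤ r.length := by omega
            have hSr : (r.take (k-1)).toFinset = S := by
              rw [hS, hurv, List.take_append_of_le_length htk]
            rw [hSr]; exact hxH
          · rw [hw, hwr]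
            refine ColorsOK_cons (by omega) hCwr ?_
            intro j hj hjk
            have htk : k - 1 ≤ r.length := by omega
            have hSr : (r.take (k-1)).toFinset = S := by
              rw [hS, hurv, List.take_append_of_le_length htk]
            rw [hSr]
            exact hxL₂ (φ (Ew k r j)) (List.mem_map.mpr ⟨j, List.mem_range.mpr (by omega), rfl⟩))
      have hl1 : L₁.length = k-1 := by rw [hL₁]; simp
      have hl2 : L₂.length = k-1 := by rw [hL₂]; simp
      rw [hl1, hl2] at key
      linarith
  · -- phase R : append
    have hu : ∀ x : V, useg k v (x :: r) = ur ++ [x] := fun x => useg_cons_high (by omega)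
    have hw : ∀ x : V, wseg k (x :: r) = wr ++ [x] := fun x => wseg_cons_high (by omega)
    set Su := (ur.drop (ur.length + 1 - k)).toFinset with hSu
    set Sw := (wr.drop (wr.length + 1 - k)).toFinset with hSw
    have hndw : wr.Nodup := by rw [hwrd]; exact nodup_wseg (by rw [← hurd]; exact hnd)
    have hSucard : Su.card = k-1 := by
      rw [hSu, List.toFinset_card_of_nodup (List.Nodup.sublist (List.drop_sublist _ _) hnd),
        List.length_drop, hurlen]
      omega
    have hSwcard : Sw.card = k-1 := by
      rw [hSw, List.toFinset_card_of_nodup (List.Nodup.sublist (List.drop_sublist _ _) hndw),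
        List.length_drop, hwrlen]
      omega
    set L₁ := (List.range (k-1)).map (fun d => φ (Ew k ur (ur.length - (k-1) - 1 - d))) with hL₁
    set L₂ := (List.range (k-1)).map (fun d => φ (Ew k wr (wr.length - (k-1) - 1 - d))) with hL₂
    have hl1 : L₁.length = k-1 := by rw [hL₁]; simp
    have hl2 : L₂.length = k-1 := by rw [hL₂]; simp
    have build : ∀ x, x ∉ used → insert x Su ∈ H → insert x Sw ∈ H →
        (∀ i ∈ L₁, φ (insert x Su) ≠ i) → (∀ i ∈ L₂, φ (insert x Sw) ≠ i) →
        GoodP H φ k v (x :: r) := by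
      intro x hxused hxHu hxHw hxL₁ hxL₂
      have hxur : x ∉ ur := fun hh => hxused (List.mem_toFinset.mpr hh)
      refine ⟨?_, ?_, ?_, ?_, ?_⟩
      · rw [hu]
        have : ur ++ [x] = ur ++ x :: [] := rfl
        rw [this, List.nodup_middle]
        simp only [List.append_nil]
        exact List.nodup_cons.mpr ⟨hxur, hnd⟩
      · rw [hu]
        refine EdgesOK_append (by omega) hEu ?_
        intro _
        rw [← hSu]; exact hxHu
      · rw [hu]
        refine ColorsOK_append (by omega) hCu ?_
        intro j hj hjk
        rw [← hSu]
        refine (hxL₁ (φ (Ew k ur j)) ?_).symm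
        refine List.mem_map.mpr ⟨ur.length - (k-1) - 1 - j, List.mem_range.mpr (by omega), ?_⟩
        rw [show ur.length - (k-1) - 1 - (ur.length - (k-1) - 1 - j) = j from by omega]
      · rw [hw]
        refine EdgesOK_append (by omega) hEw ?_
        intro _
        rw [← hSw]; exact hxHw
      · rw [hw]
        refine ColorsOK_append (by omega) hCw ?_
        intro j hj hjk
        rw [← hSw]
        refine (hxL₂ (φ (Ew k wr j)) ?_).symm
        refine List.mem_map.mpr ⟨wr.length - (k-1) - 1 - j, List.mem_range.mpr (by omega), ?_⟩
        rw [show wr.length - (k-1) - 1 - (wr.length - (k-1) - 1 - j) = j from by omega]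
    rcases le_or_gt r.length (3*k-4) with hmid | hbig
    · -- double step
      rw [if_pos ⟨hge, hmid⟩]
      have key := count_double hcard (by omega) hn hdeg hcol hc0 Su Sw hSucard hSwcard L₁ L₂
        used T
        (fun x hxused _ _ hxHu hxHw hxL₁ hxL₂ => hT x (build x hxused hxHu hxHw hxL₁ hxL₂))
      rw [hl1, hl2] at key
      linarith
    · -- single step (the two new windows coincide)
      rw [if_neg (by omega)]
      have hdr : ur.drop (ur.length + 1 - k) = wr.drop (wr.length + 1 - k) := by
        have hurdef2 : ur = r.drop (r.length - (2*k-2)) ++ v :: (r.take (r.length - (2*k-2))).reverse := rfl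
        have hwrdef2 : wr = r.drop (r.length - (2*k-2)) ++ (r.take (r.length - (2*k-2))).reverse := rfl
        have hLp : (r.drop (r.length - (2*k-2))).length = 2*k-2 := by
          rw [List.length_drop]; omega
        rw [hurlen, hwrlen, hurdef2, hwrdef2]
        rw [show r.length + 1 + 1 - k = (r.drop (r.length - (2*k-2))).length + (r.length + 2 - k - (2*k-2)) from by rw [hLp]; omega]
        rw [show r.length + 1 - k = (r.drop (r.length - (2*k-2))).length + (r.length + 1 - k - (2*k-2)) from by rw [hLp]; omega]
        rw [List.drop_length_add_append, List.drop_length_add_append]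
        rw [show r.length + 2 - k - (2*k-2) = (r.length + 1 - k - (2*k-2)) + 1 from by omega]
        rw [List.drop_succ_cons]
      have hSuSw : Sw = Su := by rw [hSu, hSw, hdr]
      have key := count_single hcard (by omega) hn hdeg hcol hc0 Su hSucard L₁ L₂ used T
        (by
          intro x hxused hxS hxH hxL₁ hxL₂
          exact hT x (build x hxused hxH (by rw [hSuSw]; exact hxH) hxL₁
            (by rw [hSuSw]; exact hxL₂)))
      rw [hl1, hl2] at key
      linarith
end P5

end Stmt10


open Stmt10

/-- in a Dirac-type colored `k`-graph with locally bounded colors,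
every vertex has many properly colored absorbers. -/
theorem stmt_10 (k : ℕ) (hk : 3 ≤ k) :
    ∃ γ₀ : ℝ, 0 < γ₀ ∧ ∀ γ : ℝ, 0 < γ → γ ≤ γ₀ →
      ∃ n₀ : ℕ, ∀ n : ℕ, n₀ ≤ n →
        ∀ c : ℝ, c ≤ 4 * (γ/2)^k / (3 * (k : ℝ))^2 →
          ∀ (H : Finset (Finset (Fin n))) (φ : Finset (Fin n) → ℕ),
            (∀ e ∈ H, e.card = k) →
            (∀ S : Finset (Fin n), S.card = k - 1 →
              ((1 : ℝ)/2 + γ) * n ≤ (hypDeg H S : ℝ)) →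
            (∀ i : ℕ, ∀ S : Finset (Fin n), S.card = k - 1 →
              (hypDeg (H.filter fun e => φ e = i) S : ℝ) ≤ c * n) →
            ∀ v : Fin n,
              4 * (γ/2)^k * (n : ℝ)^(4 * k - 4) ≤
                (Nat.card {w : Fin (4 * k - 4) → Fin n //
                  IsPcAbsorber n k H φ v w} : ℝ) := by
  refine ⟨(1/2)^(2*k), by positivity, ?_⟩
  intro γ hγ hγle
  refine ⟨8*k + ⌈8*(k:ℝ)/γ⌉₊ + 1, ?_⟩
  intro n hn c hc H φ hcard hdeg hcol v
  classical
  have hn8 : 8*k ≤ n := by omega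
  have hnpos : 0 < n := by omega
  have hnreal : (0:ℝ) < n := by exact_mod_cast hnpos
  have hkreal : (3:ℝ) ≤ k := by exact_mod_cast hk
  have hγ1 : γ ≤ 1/2 := by
    have h1 : ((1:ℝ)/2)^(2*k) ≤ (1/2)^1 :=
      pow_le_pow_of_le_one (by norm_num) (by norm_num) (by omega)
    have h2 : ((1:ℝ)/2)^1 = 1/2 := by norm_num
    linarith [hγle.trans h1]
  have hγn : 8*(k:ℝ) ≤ γ * n := by
    have h1 : (8*(k:ℝ))/γ ≤ (⌈8*(k:ℝ)/γ⌉₊ : ℝ) := Nat.le_ceil _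
    have h2 : ((⌈8*(k:ℝ)/γ⌉₊ : ℕ) : ℝ) ≤ n := by
      exact_mod_cast (by omega : ⌈8*(k:ℝ)/γ⌉₊ ≤ n)
    have h3 : (8*(k:ℝ))/γ ≤ n := h1.trans h2
    calc 8*(k:ℝ) = (8*(k:ℝ)/γ) * γ := by field_simp
      _ ≤ (n:ℝ) * γ := mul_le_mul_of_nonneg_right h3 hγ.le
      _ = γ * n := mul_comm _ _
  have hcb : c ≤ γ / (18*(k:ℝ)^2) := by
    have hγ2pos : (0:ℝ) ≤ γ/2 := by linarith
    have h1 : (γ/2)^k ≤ γ/8 := by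
      have e1 : (γ/2)^k = (γ/2)^(k-1) * (γ/2) := by
        rw [← pow_succ]
        congr 1
        omega
      have e2 : (γ/2)^(k-1) ≤ (1/2:ℝ)^(k-1) := pow_le_pow_left₀ hγ2pos (by linarith) _
      have e3 : ((1:ℝ)/2)^(k-1) ≤ (1/2)^2 :=
        pow_le_pow_of_le_one (by norm_num) (by norm_num) (by omega)
      calc (γ/2)^k = (γ/2)^(k-1) * (γ/2) := e1
        _ ≤ (1/2)^2 * (γ/2) := mul_le_mul_of_nonneg_right (e2.trans e3) hγ2pos
        _ = γ/8 := by ring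
    have h2 : (3*(k:ℝ))^2 = 9*(k:ℝ)^2 := by ring
    have h3 : (0:ℝ) < 9*(k:ℝ)^2 := by nlinarith
    calc c ≤ 4*(γ/2)^k / (3*(k:ℝ))^2 := hc
      _ = 4*(γ/2)^k / (9*(k:ℝ)^2) := by rw [h2]
      _ ≤ (4*(γ/8)) / (9*(k:ℝ)^2) := by gcongr <;> linarith
      _ ≤ γ / (18*(k:ℝ)^2) := by
          rw [div_le_div_iff₀ h3 (by nlinarith)]
          nlinarith [sq_nonneg (k:ℝ)]
  have hc0 : 0 ≤ c * n := by
    obtain ⟨S, -, hScard⟩ := Finset.exists_subset_card_eq (s := (univ : Finset (Fin n))) (n := k-1)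
      (by rw [Finset.card_univ, Fintype.card_fin]; omega)
    have h1 := hcol 0 S hScard
    have h2 : (0:ℝ) ≤ (hypDeg (H.filter fun e => φ e = 0) S : ℝ) := Nat.cast_nonneg _
    linarith
  have hsingle : 2*(((k-1:ℕ)):ℝ)*(c*(n:ℝ)) + 4*(k:ℝ) ≤ γ*(n:ℝ) := by
    have hk1 : (((k-1:ℕ)):ℝ) ≤ (k:ℝ) := by exact_mod_cast (by omega : (k-1:ℕ) ≤ k)
    have hk0 : (0:ℝ) ≤ (((k-1:ℕ)):ℝ) := Nat.cast_nonneg _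
    have hcn : c * n ≤ (γ/(18*(k:ℝ)^2)) * n := mul_le_mul_of_nonneg_right hcb hnreal.le
    have t1 : 2*(((k-1:ℕ)):ℝ)*(c*n) ≤ 2*(((k-1:ℕ)):ℝ)*((γ/(18*(k:ℝ)^2))*n) := by
      apply mul_le_mul_of_nonneg_left hcn (by positivity)
    have t2 : 2*(((k-1:ℕ)):ℝ)*((γ/(18*(k:ℝ)^2))*n) ≤ 2*(k:ℝ)*((γ/(18*(k:ℝ)^2))*n) := by
      apply mul_le_mul_of_nonneg_right _ (by positivity)
      linarith
    have h3 : 2*(k:ℝ)*((γ/(18*(k:ℝ)^2))*n) = (γ*n)/(9*(k:ℝ)) := by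
      field_simp
      ring
    have h4 : (γ*n)/(9*(k:ℝ)) ≤ (γ*n)/2 := by
      apply div_le_div_of_nonneg_left (by nlinarith) (by norm_num) (by nlinarith)
    have h5 : 4*(k:ℝ) ≤ (γ*n)/2 := by linarith
    linarith
  have hFin : Fintype.card (Fin n) = n := Fintype.card_fin n
  obtain ⟨s, hs, hprod⟩ := tree_count (fun r => GoodP H φ k v r) (4*k-4)
    (fun i => if 2*k-2 ≤ i ∧ i ≤ 3*k-4 then γ*(n:ℝ) else (n:ℝ)/2)
    (fun i => by split_ifs <;> positivity)
    (goodP_nil hk v)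
    (fun r hr hrlen =>
      step_bound hk hcard hFin hdeg hcol hc0 hsingle hn8 v r hr hrlen
        (univ.filter fun x => GoodP H φ k v (x :: r))
        (fun x hx => Finset.mem_filter.mpr ⟨Finset.mem_univ _, hx⟩))
  -- compute the product
  have hcard1 : ((Finset.range (4*k-4)).filter (fun i => 2*k-2 ≤ i ∧ i ≤ 3*k-4)).card = k-1 := by
    have he : (Finset.range (4*k-4)).filter (fun i => 2*k-2 ≤ i ∧ i ≤ 3*k-4)
        = Finset.Icc (2*k-2) (3*k-4) := by
      ext i
      simp only [Finset.mem_filter, Finset.mem_range, Finset.mem_Icc]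
      omega
    rw [he, Nat.card_Icc]
    omega
  have hcard2 : ((Finset.range (4*k-4)).filter (fun i => ¬(2*k-2 ≤ i ∧ i ≤ 3*k-4))).card
      = 3*k-3 := by
    have h1 := Finset.card_filter_add_card_filter_not
      (s := Finset.range (4*k-4)) (p := fun i => 2*k-2 ≤ i ∧ i ≤ 3*k-4)
    rw [Finset.card_range, hcard1] at h1
    omega
  have hprodeq : (∏ i ∈ Finset.range (4*k-4),
        (if 2*k-2 ≤ i ∧ i ≤ 3*k-4 then γ*(n:ℝ) else (n:ℝ)/2))
      = (γ*(n:ℝ))^(k-1) * ((n:ℝ)/2)^(3*k-3) := by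
    rw [Finset.prod_ite, Finset.prod_const, Finset.prod_const, hcard1, hcard2]
  -- scalar inequality
  have hscal : 4*(γ/2)^k*(n:ℝ)^(4*k-4) ≤ (γ*(n:ℝ))^(k-1) * ((n:ℝ)/2)^(3*k-3) := by
    have e1 : (γ*(n:ℝ))^(k-1) * ((n:ℝ)/2)^(3*k-3)
        = (γ^(k-1) * (1/2:ℝ)^(3*k-3)) * (n:ℝ)^(4*k-4) := by
      have d1 : ((n:ℝ)/2)^(3*k-3) = (n:ℝ)^(3*k-3) * (1/2:ℝ)^(3*k-3) := by
        rw [← mul_pow]; congr 1; ring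
      rw [mul_pow, d1, show (4*k-4) = (k-1) + (3*k-3) from by omega, pow_add]
      ring
    rw [e1]
    apply mul_le_mul_of_nonneg_right _ (by positivity)
    have em : (γ/2)^k = γ^k * (1/2:ℝ)^k := by rw [← mul_pow]; congr 1; ring
    have ek : γ^k = γ^(k-1) * γ := by
      rw [← pow_succ]; congr 1; omega
    have p1 : 4*(γ*((1/2:ℝ))^k) ≤ (1/2:ℝ)^(3*k-3) := by
      have q1 : γ*((1/2:ℝ))^k ≤ ((1/2:ℝ))^(2*k)*((1/2:ℝ))^k :=
        mul_le_mul_of_nonneg_right hγle (by positivity)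
      have q2 : ((1/2:ℝ))^(2*k)*((1/2:ℝ))^k = ((1/2:ℝ))^(3*k) := by
        rw [← pow_add]; congr 1; omega
      have q3 : ((1/2:ℝ))^(3*k) = ((1/2:ℝ))^3 * ((1/2:ℝ))^(3*k-3) := by
        rw [← pow_add]; congr 1; omega
      have q4 : (0:ℝ) ≤ ((1/2:ℝ))^(3*k-3) := by positivity
      calc 4*(γ*((1/2:ℝ))^k) ≤ 4*(((1/2:ℝ))^(2*k)*((1/2:ℝ))^k) := by linarith
        _ = 4*(((1/2:ℝ))^3 * ((1/2:ℝ))^(3*k-3)) := by rw [q2, q3]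
        _ = (1/2) * ((1/2:ℝ))^(3*k-3) := by ring
        _ ≤ ((1/2:ℝ))^(3*k-3) := by linarith
    have hpow0 : (0:ℝ) ≤ γ^(k-1) := by positivity
    calc 4*(γ/2)^k = γ^(k-1) * (4*(γ*((1/2:ℝ))^k)) := by rw [em, ek]; ring
      _ ≤ γ^(k-1) * ((1/2:ℝ))^(3*k-3) := mul_le_mul_of_nonneg_left p1 hpow0
  -- convert good lists into absorbers
  have hret : ∀ r : List (Fin n), r.length = 4*k-4 →
      r = ((wseg k r).drop (2*k-2)).reverse ++ (wseg k r).take (2*k-2) := by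
    intro r hrlen
    have hLp : (r.drop (r.length - (2*k-2))).length = 2*k-2 := by
      rw [List.length_drop]; omega
    have hwdef : wseg k r
        = r.drop (r.length-(2*k-2)) ++ (r.take (r.length-(2*k-2))).reverse := rfl
    have htake : (wseg k r).take (2*k-2) = r.drop (r.length-(2*k-2)) := by
      rw [hwdef]; exact List.take_left' hLp
    have hdropw : (wseg k r).drop (2*k-2) = (r.take (r.length-(2*k-2))).reverse := by
      rw [hwdef]; exact List.drop_left' hLp
    rw [htake, hdropw, List.reverse_reverse]
    conv_lhs => rw [← List.take_append_drop (r.length-(2*k-2)) r]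
  have habs : ∀ r ∈ s, List.ofFn (fun i : Fin (4*k-4) => (wseg k r).getD i.val v) = wseg k r
      ∧ IsPcAbsorber n k H φ v (fun i : Fin (4*k-4) => (wseg k r).getD i.val v) := by
    intro r hrs
    obtain ⟨hGood, hrlen⟩ := hs r hrs
    obtain ⟨hnd, hEu, hCu, hEw, hCw⟩ := hGood
    have hwslen : (wseg k r).length = 4*k-4 := by rw [length_wseg, hrlen]
    have hofn : List.ofFn (fun i : Fin (4*k-4) => (wseg k r).getD i.val v) = wseg k r := by
      apply List.ext_getElem
      · rw [List.length_ofFn, hwslen]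
      · intro i h1 h2
        rw [List.getElem_ofFn]
        exact List.getD_eq_getElem _ _ (by rw [hwslen]; simpa using h1)
    have hLp : (r.drop (r.length - (2*k-2))).length = 2*k-2 := by
      rw [List.length_drop]; omega
    have hwdef : wseg k r
        = r.drop (r.length-(2*k-2)) ++ (r.take (r.length-(2*k-2))).reverse := rfl
    have htake : (wseg k r).take (2*k-2) = r.drop (r.length-(2*k-2)) := by
      rw [hwdef]; exact List.take_left' hLp
    have hdropw : (wseg k r).drop (2*k-2) = (r.take (r.length-(2*k-2))).reverse := by
      rw [hwdef]; exact List.drop_left' hLp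
    have hmid : (wseg k r).take (2*k-2) ++ v :: (wseg k r).drop (2*k-2) = useg k v r := by
      rw [htake, hdropw]; rfl
    refine ⟨hofn, ?_, ?_⟩
    · rw [hofn]
      exact isPcPath (by omega) (nodup_wseg hnd) (by rw [hwslen]; omega) hEw hCw
    · rw [hofn, hmid]
      exact isPcPath (by omega) hnd (by rw [length_useg, hrlen]; omega) hEu hCu
  have hinj : Set.InjOn (fun r : List (Fin n) =>
      (fun i : Fin (4*k-4) => (wseg k r).getD i.val v)) ↑s := by
    intro r₁ h₁ r₂ h₂ hFeq
    have e1 : wseg k r₁ = wseg k r₂ := by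
      rw [← (habs r₁ h₁).1, ← (habs r₂ h₂).1]
      exact congrArg List.ofFn hFeq
    rw [hret r₁ (hs r₁ h₁).2, hret r₂ (hs r₂ h₂).2, e1]
  have hcardle : s.card ≤ (univ.filter (fun w : Fin (4*k-4) → Fin n =>
      IsPcAbsorber n k H φ v w)).card := by
    apply Finset.card_le_card_of_injOn _
      (fun r hrs => Finset.mem_filter.mpr ⟨Finset.mem_univ _, (habs r hrs).2⟩) hinj
  have hNat : (Nat.card {w : Fin (4*k-4) → Fin n // IsPcAbsorber n k H φ v w} : ℕ)
      = (univ.filter (fun w : Fin (4*k-4) → Fin n => IsPcAbsorber n k H φ v w)).card := by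
    rw [Nat.card_eq_fintype_card, Fintype.card_subtype]
  rw [hNat]
  calc 4*(γ/2)^k*(n:ℝ)^(4*k-4) ≤ (γ*(n:ℝ))^(k-1) * ((n:ℝ)/2)^(3*k-3) := hscal
    _ = ∏ i ∈ Finset.range (4*k-4),
        (if 2*k-2 ≤ i ∧ i ≤ 3*k-4 then γ*(n:ℝ) else (n:ℝ)/2) := hprodeq.symm
    _ ≤ (s.card : ℝ) := hprod
    _ ≤ _ := Nat.cast_le.mpr hcardle
end
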